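/- arXiv:2603.15817 — 2 statements merged into one kernel-verified Lean document; each statement's English description precedes it below -/
import Mathlib

section
/- Let D : 𝒵 → ℝ and, for each t, let D_t : 𝒵 → ℝ be measurable functions (interpreted as an estimating function evaluated along a regular submodel, D_t = D_k(·| β(P_{t,s}), η(P_{t,s})) and D = D_k(·|β₀,η₀)). Assume: (i, unbiasedness) E_{P_{t,s}}[D_t(Z)] = 0 for all sufficiently small t and E₀[D(Z)] = 0; (ii, continuity) ‖D_t − D‖_{L₂(P₀)} → 0 as t → 0; (iii, uniform boundedness) there exist C < ∞ and δ > 0 with |D_t(z)| ≤ C for all z ∈ 𝒵 and |t| < δ. Then t ↦ E₀[D_t(Z)] is differentiable at t = 0 with (d/dt) E₀[D_t(Z)] |_{t=0} = −E₀[D(Z) s(Z)], where s is the score of the submodel. -/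
/-! STATEMENT 10: the derivative identity underlying the gradient characterization
(Lemma 1.2 of van der Laan & Robins): for an unbiased estimating function D_t along a
regular submodel, continuous in L₂(P₀) and uniformly bounded near 0,
(d/dt) E₀[D_t] |_{t=0} = −E₀[D s]. -/

open MeasureTheory Filter Topology Set ENNReal

set_option maxHeartbeats 1000000

namespace Semiparam

variable {Z : Type*} [MeasurableSpace Z]

/-- `p` is a density of `P` with respect to `ν`. -/
def IsDensityOf (ν P : Measure Z) (p : Z → ℝ) : Prop :=
  P = ν.withDensity (fun z => ENNReal.ofReal (p z))

/-- A regular (QMD) parametric submodel through `P0` (which has density `p0` w.r.t. `ν`)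
inside the model `model`, with score `s`. -/
structure QMDSubmodel (ν : Measure Z) (model : Set (Measure Z)) (P0 : Measure Z)
    (p0 : Z → ℝ) (s : Z → ℝ) where
  ε : ℝ
  εpos : 0 < ε
  P : ℝ → Measure Z
  p : ℝ → Z → ℝ
  mem : ∀ t ∈ Set.Ioo (-ε) ε, P t ∈ model
  prob : ∀ t ∈ Set.Ioo (-ε) ε, IsProbabilityMeasure (P t)
  zero : P 0 = P0
  p_zero : p 0 = p0
  p_meas : ∀ t ∈ Set.Ioo (-ε) ε, Measurable (p t)
  density : ∀ t ∈ Set.Ioo (-ε) ε, IsDensityOf ν (P t) (p t)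
  score_memLp : MemLp s 2 P0
  score_mean_zero : ∫ z, s z ∂P0 = 0
  qmd : Tendsto (fun t => ∫ z, ((Real.sqrt (p t z) - Real.sqrt (p0 z)) / t
      - (1/2) * s z * Real.sqrt (p0 z)) ^ 2 ∂ν) (𝓝[≠] (0:ℝ)) (𝓝 0)

variable {ν : Measure Z}

lemma sq_sqrt_max (x : ℝ) : Real.sqrt x ^ 2 = max x 0 := by
  rcases le_total x 0 with h | h
  · rw [Real.sqrt_eq_zero'.mpr h, max_eq_right h]; ring
  · rw [Real.sq_sqrt h, max_eq_left h]

lemma ofReal_sqrt_sq (x : ℝ) : ENNReal.ofReal (Real.sqrt x ^ 2) = ENNReal.ofReal x := by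
  rw [sq_sqrt_max]
  rcases le_total x 0 with h | h
  · rw [max_eq_right h, ENNReal.ofReal_zero, Eq.comm, ENNReal.ofReal_eq_zero]; exact h
  · rw [max_eq_left h]

lemma toReal_ofReal_sq (x : ℝ) : (ENNReal.ofReal x).toReal = Real.sqrt x ^ 2 := by
  rw [sq_sqrt_max]
  rcases le_total x 0 with h | h
  · rw [max_eq_right h, ENNReal.ofReal_eq_zero.mpr h, ENNReal.toReal_zero]
  · rw [max_eq_left h, ENNReal.toReal_ofReal h]

lemma integral_withDensity' {p : Z → ℝ} (hp : Measurable p) (f : Z → ℝ) :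
    ∫ z, f z ∂(ν.withDensity fun z => ENNReal.ofReal (p z))
      = ∫ z, f z * Real.sqrt (p z) ^ 2 ∂ν := by
  have h : (fun z => ENNReal.ofReal (p z)) = fun z => ((p z).toNNReal : ℝ≥0∞) :=
    rfl
  rw [h, integral_withDensity_eq_integral_smul hp.real_toNNReal f]
  refine integral_congr_ae (Eventually.of_forall fun z => ?_)
  simp [NNReal.smul_def, Real.coe_toNNReal', sq_sqrt_max, mul_comm]

lemma nnnorm_mul_sqrt (a x : ℝ) :
    ((‖a * Real.sqrt x‖₊ : ℝ≥0∞)) ^ 2 = (‖a‖₊ : ℝ≥0∞) ^ 2 * ENNReal.ofReal x := by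
  rw [nnnorm_mul, ENNReal.coe_mul, mul_pow]
  congr 1
  calc ((‖Real.sqrt x‖₊ : ℝ≥0∞)) ^ 2
      = (ENNReal.ofReal ‖Real.sqrt x‖) ^ 2 := by rw [ofReal_norm, enorm_eq_nnnorm]
    _ = ENNReal.ofReal (‖Real.sqrt x‖ ^ 2) := (ENNReal.ofReal_pow (norm_nonneg _) 2).symm
    _ = ENNReal.ofReal x := by
        rw [Real.norm_of_nonneg (Real.sqrt_nonneg x), ofReal_sqrt_sq]

lemma eLpNorm_mul_sqrt {p0 : Z → ℝ} (hp0 : Measurable p0) {f : Z → ℝ} (hf : Measurable f) :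
    eLpNorm (fun z => f z * Real.sqrt (p0 z)) 2 ν
      = eLpNorm f 2 (ν.withDensity fun z => ENNReal.ofReal (p0 z)) := by
  rw [eLpNorm_eq_lintegral_rpow_enorm_toReal two_ne_zero ENNReal.ofNat_ne_top,
    eLpNorm_eq_lintegral_rpow_enorm_toReal two_ne_zero ENNReal.ofNat_ne_top]
  simp only [enorm_eq_nnnorm]
  congr 1
  have hmeas : Measurable fun z => ((‖f z‖₊ : ℝ≥0∞)) ^ (2 : ℝ≥0∞).toReal :=
    (hf.nnnorm.coe_nnreal_ennreal).pow_const _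
  rw [lintegral_withDensity_eq_lintegral_mul ν hp0.ennreal_ofReal hmeas]
  refine lintegral_congr fun z => ?_
  simp only [Pi.mul_apply]
  have h2 : ((2 : ℝ≥0∞)).toReal = (2 : ℝ) := by norm_num
  rw [h2, ENNReal.rpow_two, ENNReal.rpow_two, nnnorm_mul_sqrt, mul_comm]

lemma N_eq {μ : Measure Z} {f : Z → ℝ} (hf : AEStronglyMeasurable f μ) :
    Real.sqrt (∫ z, f z ^ 2 ∂μ) = (eLpNorm f 2 μ).toReal := by
  have hsq : AEStronglyMeasurable (fun z => f z ^ 2) μ := by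
    exact hf.pow 2
  have hof : ∀ z, ENNReal.ofReal (f z ^ 2) = (‖f z‖₊ : ℝ≥0∞) ^ 2 := by
    intro z
    rw [← sq_abs, ← Real.norm_eq_abs, ← enorm_eq_nnnorm, ← ofReal_norm,
      ENNReal.ofReal_pow (norm_nonneg _)]
  have h2 : ((2 : ℝ≥0∞)).toReal = (2 : ℝ) := by norm_num
  have hl : ∫⁻ z, (‖f z‖₊ : ℝ≥0∞) ^ 2 ∂μ = eLpNorm f 2 μ ^ 2 := by
    rw [eLpNorm_eq_lintegral_rpow_enorm_toReal two_ne_zero ENNReal.ofNat_ne_top, h2]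
    simp only [enorm_eq_nnnorm]
    have hX : ∫⁻ z, (‖f z‖₊ : ℝ≥0∞) ^ (2 : ℝ) ∂μ = ∫⁻ z, (‖f z‖₊ : ℝ≥0∞) ^ 2 ∂μ :=
      lintegral_congr fun z => ENNReal.rpow_two _
    rw [hX, ← ENNReal.rpow_two, ← ENNReal.rpow_mul,
      show (1 / (2:ℝ)) * 2 = 1 by norm_num, ENNReal.rpow_one]
  by_cases htop : eLpNorm f 2 μ = ∞
  · have hni : ¬ Integrable (fun z => f z ^ 2) μ := by
      intro hint
      have := hint.2
      rw [hasFiniteIntegral_iff_ofReal (Eventually.of_forall fun z => sq_nonneg _)] at this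
      rw [lintegral_congr hof, hl, htop] at this
      rw [ENNReal.top_pow (by norm_num : 2 ≠ 0)] at this
      exact absurd this (lt_irrefl _)
    rw [integral_undef hni, htop, Real.sqrt_zero, ENNReal.toReal_top]
  · rw [integral_eq_lintegral_of_nonneg_ae (Eventually.of_forall fun z => sq_nonneg _) hsq,
      lintegral_congr hof, hl, ENNReal.toReal_pow, Real.sqrt_sq ENNReal.toReal_nonneg]

lemma L2.integrable_mul {μ : Measure Z} {f g : Z → ℝ} (hf : MemLp f 2 μ) (hg : MemLp g 2 μ) :
    Integrable (fun z => f z * g z) μ := by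
  have h1 : (1 : ℝ≥0∞) / 1 = 1 / 2 + 1 / 2 := by
    rw [ENNReal.div_add_div_same, one_add_one_eq_two,
      ENNReal.div_self one_ne_zero ENNReal.one_ne_top,
      ENNReal.div_self (by norm_num) (by norm_num)]
  have h : MemLp (f • g) 1 μ := hg.smul hf
  rw [memLp_one_iff_integrable] at h
  exact h

lemma cs {μ : Measure Z} {f g : Z → ℝ} (hf : MemLp f 2 μ) (hg : MemLp g 2 μ) :
    |∫ z, f z * g z ∂μ| ≤ Real.sqrt (∫ z, f z ^ 2 ∂μ) * Real.sqrt (∫ z, g z ^ 2 ∂μ) := by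
  have h2 : ENNReal.ofReal (2 : ℝ) = 2 := by norm_num
  have hconj : Real.HolderConjugate 2 2 := Real.HolderConjugate.two_two
  have hf2 : MemLp f (ENNReal.ofReal 2) μ := by rw [h2]; exact hf
  have hg2 : MemLp g (ENNReal.ofReal 2) μ := by rw [h2]; exact hg
  have hH := integral_mul_norm_le_Lp_mul_Lq (μ := μ) hconj hf2 hg2
  have habs : |∫ z, f z * g z ∂μ| ≤ ∫ z, ‖f z‖ * ‖g z‖ ∂μ := by
    rw [← Real.norm_eq_abs]
    refine (norm_integral_le_integral_norm _).trans ?_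
    refine le_of_eq (integral_congr_ae (Eventually.of_forall fun z => ?_))
    simp
  have he1 : ∫ z, ‖f z‖ ^ (2:ℝ) ∂μ = ∫ z, f z ^ 2 ∂μ := by
    refine integral_congr_ae (Eventually.of_forall fun z => ?_)
    show ‖f z‖ ^ (2:ℝ) = f z ^ 2
    rw [Real.rpow_two, Real.norm_eq_abs, sq_abs]
  have he2 : ∫ z, ‖g z‖ ^ (2:ℝ) ∂μ = ∫ z, g z ^ 2 ∂μ := by
    refine integral_congr_ae (Eventually.of_forall fun z => ?_)
    show ‖g z‖ ^ (2:ℝ) = g z ^ 2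
    rw [Real.rpow_two, Real.norm_eq_abs, sq_abs]
  rw [he1, he2] at hH
  refine habs.trans (hH.trans (le_of_eq ?_))
  rw [Real.sqrt_eq_rpow, Real.sqrt_eq_rpow]

lemma sqrt_memℒp {p : Z → ℝ} (hp : Measurable p)
    (h1 : ∫⁻ z, ENNReal.ofReal (p z) ∂ν = 1) :
    MemLp (fun z => Real.sqrt (p z)) 2 ν ∧ ∫ z, Real.sqrt (p z) ^ 2 ∂ν = 1 := by
  have hm : Measurable fun z => Real.sqrt (p z) := Real.continuous_sqrt.measurable.comp hp
  have hl : ∫⁻ z, ENNReal.ofReal (Real.sqrt (p z) ^ 2) ∂ν = 1 := by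
    rw [lintegral_congr fun z => ofReal_sqrt_sq (p z)]; exact h1
  have hint : Integrable (fun z => Real.sqrt (p z) ^ 2) ν := by
    refine ⟨(hm.pow_const 2).aestronglyMeasurable, ?_⟩
    rw [hasFiniteIntegral_iff_ofReal (Eventually.of_forall fun z => sq_nonneg _), hl]
    exact ENNReal.one_lt_top
  refine ⟨(memLp_two_iff_integrable_sq hm.aestronglyMeasurable).mpr hint, ?_⟩
  rw [integral_eq_lintegral_of_nonneg_ae (Eventually.of_forall fun z => sq_nonneg _)
    (hm.pow_const 2).aestronglyMeasurable, hl, ENNReal.toReal_one]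


theorem gradient_characterization_derivative
    (ν : Measure Z) [SigmaFinite ν]
    (model : Set (Measure Z))
    (P0 : Measure Z) [IsProbabilityMeasure P0]
    (p0 : Z → ℝ) (hp0_meas : Measurable p0) (hp0_nonneg : ∀ᵐ z ∂ν, 0 ≤ p0 z)
    (hp0 : IsDensityOf ν P0 p0)
    (s : Z → ℝ) (S : QMDSubmodel ν model P0 p0 s)
    (D : Z → ℝ) (Dt : ℝ → Z → ℝ)
    (hD_meas : Measurable D) (hDt_meas : ∀ t, Measurable (Dt t))
    -- (i) unbiasedness along the submodel, and E₀[D] = 0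
    (h_unbiased : ∀ᶠ t in 𝓝 (0:ℝ), ∫ z, Dt t z ∂(S.P t) = 0)
    (hD_mean : ∫ z, D z ∂P0 = 0)
    -- (ii) continuity in L₂(P₀)
    (h_cont : Tendsto (fun t => eLpNorm (fun z => Dt t z - D z) 2 P0)
      (𝓝[≠] (0:ℝ)) (𝓝 0))
    -- (iii) uniform boundedness near 0
    (h_bdd : ∃ C : ℝ, ∃ δ > 0, ∀ t : ℝ, |t| < δ → ∀ z : Z, |Dt t z| ≤ C) :
    HasDerivAt (fun t => ∫ z, Dt t z ∂P0) (-∫ z, D z * s z ∂P0) 0 := by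
  classical
  -- measurable representative of the score
  have hsm : AEStronglyMeasurable s P0 := S.score_memLp.1
  obtain ⟨s', hs'sm, hss'⟩ : ∃ s', StronglyMeasurable s' ∧ s =ᵐ[P0] s' :=
    ⟨hsm.mk s, hsm.stronglyMeasurable_mk, hsm.ae_eq_mk⟩
  have hs'meas : Measurable s' := hs'sm.measurable
  have hs'mem : MemLp s' 2 P0 := S.score_memLp.ae_eq hss'
  have hP0d : P0 = ν.withDensity fun z => ENNReal.ofReal (p0 z) := hp0
  -- s and s' agree ν-a.e. after multiplication by √p0
  have hsν : ∀ᵐ z ∂ν, s z * Real.sqrt (p0 z) = s' z * Real.sqrt (p0 z) := by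
    have h1 : ∀ᵐ z ∂ν, ENNReal.ofReal (p0 z) ≠ 0 → s z = s' z := by
      rw [← ae_withDensity_iff hp0_meas.ennreal_ofReal, ← hP0d]
      exact hss'
    filter_upwards [h1, hp0_nonneg] with z h1z h2z
    by_cases hz : p0 z = 0
    · rw [hz, Real.sqrt_zero, mul_zero, mul_zero]
    · have hpos : 0 < p0 z := lt_of_le_of_ne h2z (Ne.symm hz)
      rw [h1z (by simp [ENNReal.ofReal_eq_zero, not_le, hpos])]
  -- boundedness constant
  obtain ⟨C0, δ, hδpos, hC0⟩ := h_bdd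
  set C : ℝ := max C0 0 with hCdef
  have hCnn : 0 ≤ C := le_max_right _ _
  have hCb : ∀ t : ℝ, |t| < δ → ∀ z, |Dt t z| ≤ C :=
    fun t ht z => (hC0 t ht z).trans (le_max_left _ _)
  -- unbiasedness radius
  obtain ⟨δ2, hδ2pos, hub⟩ : ∃ δ2 > 0, ∀ t : ℝ, |t| < δ2 → ∫ z, Dt t z ∂(S.P t) = 0 := by
    rcases Metric.eventually_nhds_iff.mp h_unbiased with ⟨δ2, h1, h2⟩
    exact ⟨δ2, h1, fun t ht => h2 (by simpa [Real.dist_eq] using ht)⟩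
  set ε' : ℝ := min δ (min δ2 S.ε) with hε'def
  have hε'pos : 0 < ε' := lt_min hδpos (lt_min hδ2pos S.εpos)
  -- mass of p0
  have hmass0 : ∫⁻ z, ENNReal.ofReal (p0 z) ∂ν = 1 := by
    have h1 : P0 Set.univ = 1 := measure_univ
    rwa [hP0d, withDensity_apply _ MeasurableSet.univ, setLIntegral_univ] at h1
  have hr0pack := sqrt_memℒp hp0_meas hmass0
  have hr0mem : MemLp (fun z => Real.sqrt (p0 z)) 2 ν := hr0pack.1
  have hr0sq : ∫ z, Real.sqrt (p0 z) ^ 2 ∂ν = 1 := hr0pack.2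
  have hr0meas : Measurable fun z => Real.sqrt (p0 z) :=
    Real.continuous_sqrt.measurable.comp hp0_meas
  -- the function h0 = (1/2) s' √p0
  have hh0meas : Measurable fun z => 1/2 * s' z * Real.sqrt (p0 z) :=
    (measurable_const.mul hs'meas).mul hr0meas
  have hs'r0mem : MemLp (fun z => s' z * Real.sqrt (p0 z)) 2 ν := by
    refine ⟨(hs'meas.mul hr0meas).aestronglyMeasurable, ?_⟩
    rw [eLpNorm_mul_sqrt hp0_meas hs'meas, ← hP0d]
    exact hs'mem.2
  have hh0mem : MemLp (fun z => 1/2 * s' z * Real.sqrt (p0 z)) 2 ν := by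
    have h := hs'r0mem.const_mul (1/2 : ℝ)
    refine h.ae_eq (Eventually.of_forall fun z => ?_)
    ring
  set Nh : ℝ := Real.sqrt (∫ z, (1/2 * s' z * Real.sqrt (p0 z)) ^ 2 ∂ν) with hNhdef
  have hNh0 : 0 ≤ Nh := Real.sqrt_nonneg _
  have hNh_eq : Nh = (eLpNorm (fun z => 1/2 * s' z * Real.sqrt (p0 z)) 2 ν).toReal :=
    N_eq hh0meas.aestronglyMeasurable
  -- D is in L2(P0)
  have hev2δ : ∀ᶠ t in 𝓝[≠] (0:ℝ), |t| < δ :=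
    eventually_nhdsWithin_of_eventually_nhds
      (Metric.eventually_nhds_iff.mpr ⟨δ, hδpos, fun hx => by simpa [Real.dist_eq] using hx⟩)
  have hDmemP0 : MemLp D 2 P0 := by
    have hev1 : ∀ᶠ t in 𝓝[≠] (0:ℝ), eLpNorm (fun z => Dt t z - D z) 2 P0 < 1 :=
      h_cont.eventually (gt_mem_nhds zero_lt_one)
    obtain ⟨t0, ht0a, ht0b⟩ := (hev1.and hev2δ).exists
    have hDt0mem : MemLp (Dt t0) 2 P0 :=
      (memLp_top_of_bound (hDt_meas t0).aestronglyMeasurable C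
        (Eventually.of_forall fun z => by
          rw [Real.norm_eq_abs]; exact hCb t0 ht0b z)).mono_exponent le_top
    have hsubmem : MemLp (fun z => Dt t0 z - D z) 2 P0 :=
      ⟨((hDt_meas t0).sub hD_meas).aestronglyMeasurable, ht0a.trans_le le_top⟩
    exact (hDt0mem.sub hsubmem).ae_eq (Eventually.of_forall fun z => by simp)
  -- F 0 = 0
  have hF0 : ∫ z, Dt 0 z ∂P0 = 0 := by
    have h := hub 0 (by simpa using hδ2pos)
    rwa [S.zero] at h
  -- the L² distance function from the QMD property
  set QQ : ℝ → ℝ := fun t => ∫ z,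
    ((Real.sqrt (S.p t z) - Real.sqrt (p0 z)) / t - 1/2 * s' z * Real.sqrt (p0 z)) ^ 2 ∂ν
    with hQQdef
  have hQ0 : Tendsto QQ (𝓝[≠] (0:ℝ)) (𝓝 0) := by
    refine S.qmd.congr fun t => ?_
    rw [hQQdef]
    refine integral_congr_ae ?_
    filter_upwards [hsν] with z hz
    rw [mul_assoc, mul_assoc, hz]
  -- the three tendsto components
  have hsqQ : Tendsto (fun t => Real.sqrt (QQ t)) (𝓝[≠] (0:ℝ)) (𝓝 0) := by
    have h := (Real.continuous_sqrt.tendsto (0:ℝ)).comp hQ0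
    simpa [Function.comp_def] using h
  have habs : Tendsto (fun t : ℝ => |t|) (𝓝[≠] (0:ℝ)) (𝓝 0) := by
    have h := (continuous_abs.tendsto (0:ℝ)).mono_left (nhdsWithin_le_nhds (s := {(0:ℝ)}ᶜ))
    simpa using h
  have hM0 : Tendsto (fun t => (eLpNorm (fun z => Dt t z - D z) 2 P0).toReal)
      (𝓝[≠] (0:ℝ)) (𝓝 0) := by
    have h := (ENNReal.tendsto_toReal (a := 0) (by simp)).comp h_cont
    simpa [Function.comp_def] using h
  -- the dominating function tends to zero
  have hB : Tendsto (fun t => C * Real.sqrt (QQ t) * 2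
      + C * Nh * (|t| * (Real.sqrt (QQ t) + Nh))
      + (eLpNorm (fun z => Dt t z - D z) 2 P0).toReal * (2 * Nh))
      (𝓝[≠] (0:ℝ)) (𝓝 0) := by
    have h := (((hsqQ.const_mul C).mul_const 2).add
      ((habs.mul (hsqQ.add_const Nh)).const_mul (C * Nh))).add
      (hM0.mul_const (2 * Nh))
    simpa using h
  -- the key eventual bound
  have key : ∀ᶠ t in 𝓝[≠] (0:ℝ),
      dist (slope (fun u => ∫ z, Dt u z ∂P0) 0 t) (-∫ z, D z * s z ∂P0)
        ≤ C * Real.sqrt (QQ t) * 2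
          + C * Nh * (|t| * (Real.sqrt (QQ t) + Nh))
          + (eLpNorm (fun z => Dt t z - D z) 2 P0).toReal * (2 * Nh) := by
    have hsmall : ∀ᶠ t in 𝓝[≠] (0:ℝ), |t| < ε' :=
      eventually_nhdsWithin_of_eventually_nhds
        (Metric.eventually_nhds_iff.mpr ⟨ε', hε'pos, fun hx => by simpa [Real.dist_eq] using hx⟩)
    filter_upwards [hsmall, eventually_mem_nhdsWithin] with t hts htmem
    have htne : t ≠ 0 := by simpa using htmem
    have htδ : |t| < δ := lt_of_lt_of_le hts (min_le_left _ _)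
    have htδ2 : |t| < δ2 := lt_of_lt_of_le hts ((min_le_right _ _).trans (min_le_left _ _))
    have htε : t ∈ Set.Ioo (-S.ε) S.ε := by
      have := lt_of_lt_of_le hts ((min_le_right _ _).trans (min_le_right _ _))
      exact Set.mem_Ioo.mpr ⟨(abs_lt.mp this).1, (abs_lt.mp this).2⟩
    haveI hprob := S.prob t htε
    have hptm : Measurable (S.p t) := S.p_meas t htε
    have hPt : S.P t = ν.withDensity fun z => ENNReal.ofReal (S.p t z) := S.density t htε
    have hmasst : ∫⁻ z, ENNReal.ofReal (S.p t z) ∂ν = 1 := by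
      have h1 : S.P t Set.univ = 1 := measure_univ
      rwa [hPt, withDensity_apply _ MeasurableSet.univ, setLIntegral_univ] at h1
    have hrtpack := sqrt_memℒp hptm hmasst
    have hrtmem : MemLp (fun z => Real.sqrt (S.p t z)) 2 ν := hrtpack.1
    have hrtsq : ∫ z, Real.sqrt (S.p t z) ^ 2 ∂ν = 1 := hrtpack.2
    have hrtmeas : Measurable fun z => Real.sqrt (S.p t z) :=
      Real.continuous_sqrt.measurable.comp hptm
    have hdiffmem : MemLp (fun z => Real.sqrt (S.p t z) - Real.sqrt (p0 z)) 2 ν := hrtmem.sub hr0mem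
    have hgmem : MemLp (fun z => (Real.sqrt (S.p t z) - Real.sqrt (p0 z)) / t) 2 ν := by
      have h := hdiffmem.const_mul t⁻¹
      refine h.ae_eq (Eventually.of_forall fun z => ?_)
      rw [inv_mul_eq_div]
    have hgmeas : Measurable fun z => (Real.sqrt (S.p t z) - Real.sqrt (p0 z)) / t :=
      (hrtmeas.sub hr0meas).div_const t
    have hAmem : MemLp (fun z => ((Real.sqrt (S.p t z) - Real.sqrt (p0 z)) / t - 1/2 * s' z * Real.sqrt (p0 z))) 2 ν := hgmem.sub hh0mem
    have hAmeas : Measurable fun z => ((Real.sqrt (S.p t z) - Real.sqrt (p0 z)) / t - 1/2 * s' z * Real.sqrt (p0 z)) := hgmeas.sub hh0meas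
    have hsummem : MemLp (fun z => Real.sqrt (S.p t z) + Real.sqrt (p0 z)) 2 ν := hrtmem.add hr0mem
    have hDtinf : MemLp (Dt t) ∞ ν :=
      memLp_top_of_bound (hDt_meas t).aestronglyMeasurable C
        (Eventually.of_forall fun z => by rw [Real.norm_eq_abs]; exact hCb t htδ z)
    have hDtA_mem : MemLp (fun z => Dt t z * ((Real.sqrt (S.p t z) - Real.sqrt (p0 z)) / t - 1/2 * s' z * Real.sqrt (p0 z))) 2 ν := hAmem.smul hDtinf
    have hDth_mem : MemLp (fun z => Dt t z * (1/2 * s' z * Real.sqrt (p0 z))) 2 ν := hh0mem.smul hDtinf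
    have hDtmem2P0 : MemLp (Dt t) 2 P0 :=
      (memLp_top_of_bound (hDt_meas t).aestronglyMeasurable C
        (Eventually.of_forall fun z => by
          rw [Real.norm_eq_abs]; exact hCb t htδ z)).mono_exponent le_top
    have hDtDmemP0 : MemLp (fun z => Dt t z - D z) 2 P0 := hDtmem2P0.sub hDmemP0
    have hDDr0mem : MemLp (fun z => (Dt t z - D z) * Real.sqrt (p0 z)) 2 ν := by
      refine ⟨(((hDt_meas t).sub hD_meas).mul hr0meas).aestronglyMeasurable, ?_⟩
      rw [eLpNorm_mul_sqrt hp0_meas (f := fun z => Dt t z - D z) ((hDt_meas t).sub hD_meas), ← hP0d]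
      exact hDtDmemP0.2
    have hDr0mem : MemLp (fun z => D z * Real.sqrt (p0 z)) 2 ν := by
      refine ⟨(hD_meas.mul hr0meas).aestronglyMeasurable, ?_⟩
      rw [eLpNorm_mul_sqrt hp0_meas hD_meas, ← hP0d]
      exact hDmemP0.2
    have h2h0mem : MemLp (fun z => 2 * (1/2 * s' z * Real.sqrt (p0 z))) 2 ν := hh0mem.const_mul 2
    have iDr0 : Integrable (fun z => Dt t z * Real.sqrt (p0 z) ^ 2) ν := by
      have h1 : Integrable (Dt t) P0 := MemLp.integrable le_top
        (memLp_top_of_bound (hDt_meas t).aestronglyMeasurable C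
          (Eventually.of_forall fun z => by rw [Real.norm_eq_abs]; exact hCb t htδ z))
      rw [hP0d, integrable_withDensity_iff hp0_meas.ennreal_ofReal
        (Eventually.of_forall fun z => ENNReal.ofReal_lt_top)] at h1
      refine h1.congr (Eventually.of_forall fun z => ?_)
      show Dt t z * (ENNReal.ofReal (p0 z)).toReal = Dt t z * Real.sqrt (p0 z) ^ 2
      rw [toReal_ofReal_sq]
    have iDrt : Integrable (fun z => Dt t z * Real.sqrt (S.p t z) ^ 2) ν := by
      have h1 : Integrable (Dt t) (S.P t) := MemLp.integrable le_top
        (memLp_top_of_bound (hDt_meas t).aestronglyMeasurable C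
          (Eventually.of_forall fun z => by rw [Real.norm_eq_abs]; exact hCb t htδ z))
      rw [hPt, integrable_withDensity_iff hptm.ennreal_ofReal
        (Eventually.of_forall fun z => ENNReal.ofReal_lt_top)] at h1
      refine h1.congr (Eventually.of_forall fun z => ?_)
      show Dt t z * (ENNReal.ofReal (S.p t z)).toReal = Dt t z * Real.sqrt (S.p t z) ^ 2
      rw [toReal_ofReal_sq]
    have htrt : ∫ z, Dt t z * Real.sqrt (S.p t z) ^ 2 ∂ν = 0 := by
      rw [← integral_withDensity' hptm (Dt t), ← hPt]
      exact hub t htδ2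
    have htr0 : ∫ z, Dt t z ∂P0 = ∫ z, Dt t z * Real.sqrt (p0 z) ^ 2 ∂ν := by
      rw [hP0d, integral_withDensity' hp0_meas]
    have hQQts : QQ t = ∫ z, ((Real.sqrt (S.p t z) - Real.sqrt (p0 z)) / t - 1/2 * s' z * Real.sqrt (p0 z)) ^ 2 ∂ν := by simp only [hQQdef]
    have hslope2 : slope (fun u => ∫ z, Dt u z ∂P0) 0 t
        = ∫ z, (Dt t z * Real.sqrt (p0 z) ^ 2 - Dt t z * Real.sqrt (S.p t z) ^ 2) / t ∂ν := by
      rw [slope_def_field]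
      show ((∫ z, Dt t z ∂P0) - ∫ z, Dt 0 z ∂P0) / (t - 0) = _
      rw [hF0, sub_zero, sub_zero, htr0,
        show ∫ z, Dt t z * Real.sqrt (p0 z) ^ 2 ∂ν
            = ∫ z, (Dt t z * Real.sqrt (p0 z) ^ 2 - Dt t z * Real.sqrt (S.p t z) ^ 2) ∂ν from by
          rw [integral_sub iDr0 iDrt, htrt, sub_zero],
        ← integral_div]
    have hpt : ∀ z, (Dt t z * Real.sqrt (p0 z) ^ 2 - Dt t z * Real.sqrt (S.p t z) ^ 2) / t
        = -((Dt t z * ((Real.sqrt (S.p t z) - Real.sqrt (p0 z)) / t - 1/2 * s' z * Real.sqrt (p0 z))) * (Real.sqrt (S.p t z) + Real.sqrt (p0 z)) + (Dt t z * (1/2 * s' z * Real.sqrt (p0 z))) * (Real.sqrt (S.p t z) - Real.sqrt (p0 z)) + ((Dt t z - D z) * Real.sqrt (p0 z)) * (2 * (1/2 * s' z * Real.sqrt (p0 z))) + (D z * Real.sqrt (p0 z)) * (2 * (1/2 * s' z * Real.sqrt (p0 z)))) := by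
      intro z
      field_simp
      ring
    have hi1 : Integrable (fun z => (Dt t z * ((Real.sqrt (S.p t z) - Real.sqrt (p0 z)) / t - 1/2 * s' z * Real.sqrt (p0 z))) * (Real.sqrt (S.p t z) + Real.sqrt (p0 z))) ν := L2.integrable_mul hDtA_mem hsummem
    have hi2 : Integrable (fun z => (Dt t z * (1/2 * s' z * Real.sqrt (p0 z))) * (Real.sqrt (S.p t z) - Real.sqrt (p0 z))) ν := L2.integrable_mul hDth_mem hdiffmem
    have hi3 : Integrable (fun z => ((Dt t z - D z) * Real.sqrt (p0 z)) * (2 * (1/2 * s' z * Real.sqrt (p0 z)))) ν := L2.integrable_mul hDDr0mem h2h0mem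
    have hi4 : Integrable (fun z => (D z * Real.sqrt (p0 z)) * (2 * (1/2 * s' z * Real.sqrt (p0 z)))) ν := L2.integrable_mul hDr0mem h2h0mem
    have hi12 : Integrable (fun z => (Dt t z * ((Real.sqrt (S.p t z) - Real.sqrt (p0 z)) / t - 1/2 * s' z * Real.sqrt (p0 z))) * (Real.sqrt (S.p t z) + Real.sqrt (p0 z)) + (Dt t z * (1/2 * s' z * Real.sqrt (p0 z))) * (Real.sqrt (S.p t z) - Real.sqrt (p0 z))) ν := hi1.add hi2
    have hi123 : Integrable (fun z => (Dt t z * ((Real.sqrt (S.p t z) - Real.sqrt (p0 z)) / t - 1/2 * s' z * Real.sqrt (p0 z))) * (Real.sqrt (S.p t z) + Real.sqrt (p0 z)) + (Dt t z * (1/2 * s' z * Real.sqrt (p0 z))) * (Real.sqrt (S.p t z) - Real.sqrt (p0 z)) + ((Dt t z - D z) * Real.sqrt (p0 z)) * (2 * (1/2 * s' z * Real.sqrt (p0 z)))) ν := hi12.add hi3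
    have hsplit : slope (fun u => ∫ z, Dt u z ∂P0) 0 t
        = -((∫ z, (Dt t z * ((Real.sqrt (S.p t z) - Real.sqrt (p0 z)) / t - 1/2 * s' z * Real.sqrt (p0 z))) * (Real.sqrt (S.p t z) + Real.sqrt (p0 z)) ∂ν) + (∫ z, (Dt t z * (1/2 * s' z * Real.sqrt (p0 z))) * (Real.sqrt (S.p t z) - Real.sqrt (p0 z)) ∂ν) + (∫ z, ((Dt t z - D z) * Real.sqrt (p0 z)) * (2 * (1/2 * s' z * Real.sqrt (p0 z))) ∂ν) + (∫ z, (D z * Real.sqrt (p0 z)) * (2 * (1/2 * s' z * Real.sqrt (p0 z))) ∂ν)) := by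
      rw [hslope2, integral_congr_ae (Eventually.of_forall hpt), integral_neg,
        integral_add hi123 hi4, integral_add hi12 hi3, integral_add hi1 hi2]
    have hLeq : ∫ z, D z * s z ∂P0 = ∫ z, (D z * Real.sqrt (p0 z)) * (2 * (1/2 * s' z * Real.sqrt (p0 z))) ∂ν := by
      have h1 : ∫ z, D z * s z ∂P0 = ∫ z, D z * s' z ∂P0 := by
        refine integral_congr_ae ?_
        have h2 : ∀ᵐ z ∂P0, s z = s' z := hss'
        filter_upwards [h2] with z hz
        rw [hz]
      rw [h1, hP0d, integral_withDensity' hp0_meas]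
      refine integral_congr_ae (Eventually.of_forall fun z => ?_)
      ring
    -- bound 1
    have c1 := cs hDtA_mem hsummem
    have e1 : ∫ z, (Dt t z * ((Real.sqrt (S.p t z) - Real.sqrt (p0 z)) / t - 1/2 * s' z * Real.sqrt (p0 z))) ^ 2 ∂ν ≤ C ^ 2 * QQ t := by
      rw [hQQts, ← integral_const_mul]
      refine integral_mono_of_nonneg (Eventually.of_forall fun z => sq_nonneg _)
        ((hAmem.integrable_sq).const_mul (C ^ 2)) (Eventually.of_forall fun z => ?_)
      show (Dt t z * ((Real.sqrt (S.p t z) - Real.sqrt (p0 z)) / t - 1/2 * s' z * Real.sqrt (p0 z))) ^ 2 ≤ C ^ 2 * ((Real.sqrt (S.p t z) - Real.sqrt (p0 z)) / t - 1/2 * s' z * Real.sqrt (p0 z)) ^ 2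
      rw [mul_pow]
      have hb := abs_le.mp (hCb t htδ z)
      exact mul_le_mul_of_nonneg_right (sq_le_sq' hb.1 hb.2) (sq_nonneg _)
    have s1 : Real.sqrt (∫ z, (Dt t z * ((Real.sqrt (S.p t z) - Real.sqrt (p0 z)) / t - 1/2 * s' z * Real.sqrt (p0 z))) ^ 2 ∂ν) ≤ C * Real.sqrt (QQ t) := by
      rw [show C * Real.sqrt (QQ t) = Real.sqrt (C ^ 2 * QQ t) from by
        rw [Real.sqrt_mul (sq_nonneg C), Real.sqrt_sq hCnn]]
      exact Real.sqrt_le_sqrt e1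
    have e2 : ∫ z, (Real.sqrt (S.p t z) + Real.sqrt (p0 z)) ^ 2 ∂ν ≤ 4 := by
      have iS1 : Integrable (fun z => 2 * Real.sqrt (S.p t z) ^ 2) ν :=
        (hrtmem.integrable_sq).const_mul 2
      have iS2 : Integrable (fun z => 2 * Real.sqrt (p0 z) ^ 2) ν :=
        (hr0mem.integrable_sq).const_mul 2
      have iSsum : Integrable (fun z => 2 * Real.sqrt (S.p t z) ^ 2 + 2 * Real.sqrt (p0 z) ^ 2) ν :=
        iS1.add iS2
      have hle : ∫ z, (Real.sqrt (S.p t z) + Real.sqrt (p0 z)) ^ 2 ∂ν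
          ≤ ∫ z, (2 * Real.sqrt (S.p t z) ^ 2 + 2 * Real.sqrt (p0 z) ^ 2) ∂ν :=
        integral_mono_of_nonneg (Eventually.of_forall fun z => sq_nonneg _) iSsum
          (Eventually.of_forall fun z => by
            show (Real.sqrt (S.p t z) + Real.sqrt (p0 z)) ^ 2 ≤ 2 * Real.sqrt (S.p t z) ^ 2 + 2 * Real.sqrt (p0 z) ^ 2
            nlinarith [sq_nonneg (Real.sqrt (S.p t z) - Real.sqrt (p0 z))])
      have heq : ∫ z, (2 * Real.sqrt (S.p t z) ^ 2 + 2 * Real.sqrt (p0 z) ^ 2) ∂ν = 4 := by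
        rw [integral_add iS1 iS2, integral_const_mul, integral_const_mul, hrtsq, hr0sq]
        norm_num
      linarith
    have s2 : Real.sqrt (∫ z, (Real.sqrt (S.p t z) + Real.sqrt (p0 z)) ^ 2 ∂ν) ≤ 2 := by
      refine (Real.sqrt_le_sqrt e2).trans ?_
      rw [show (4:ℝ) = 2 ^ 2 from by norm_num, Real.sqrt_sq (by norm_num : (0:ℝ) ≤ 2)]
    have b1 : |∫ z, (Dt t z * ((Real.sqrt (S.p t z) - Real.sqrt (p0 z)) / t - 1/2 * s' z * Real.sqrt (p0 z))) * (Real.sqrt (S.p t z) + Real.sqrt (p0 z)) ∂ν| ≤ C * Real.sqrt (QQ t) * 2 :=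
      c1.trans (mul_le_mul s1 s2 (Real.sqrt_nonneg _) (mul_nonneg hCnn (Real.sqrt_nonneg _)))
    -- bound 2
    have c2 := cs hDth_mem hdiffmem
    have e3 : ∫ z, (Dt t z * (1/2 * s' z * Real.sqrt (p0 z))) ^ 2 ∂ν ≤ C ^ 2 * ∫ z, (1/2 * s' z * Real.sqrt (p0 z)) ^ 2 ∂ν := by
      rw [← integral_const_mul]
      refine integral_mono_of_nonneg (Eventually.of_forall fun z => sq_nonneg _)
        ((hh0mem.integrable_sq).const_mul (C ^ 2)) (Eventually.of_forall fun z => ?_)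
      show (Dt t z * (1/2 * s' z * Real.sqrt (p0 z))) ^ 2 ≤ C ^ 2 * (1/2 * s' z * Real.sqrt (p0 z)) ^ 2
      rw [mul_pow]
      have hb := abs_le.mp (hCb t htδ z)
      exact mul_le_mul_of_nonneg_right (sq_le_sq' hb.1 hb.2) (sq_nonneg _)
    have s3 : Real.sqrt (∫ z, (Dt t z * (1/2 * s' z * Real.sqrt (p0 z))) ^ 2 ∂ν) ≤ C * Nh := by
      rw [hNhdef, show C * Real.sqrt (∫ z, (1/2 * s' z * Real.sqrt (p0 z)) ^ 2 ∂ν)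
          = Real.sqrt (C ^ 2 * ∫ z, (1/2 * s' z * Real.sqrt (p0 z)) ^ 2 ∂ν) from by
        rw [Real.sqrt_mul (sq_nonneg C), Real.sqrt_sq hCnn]]
      exact Real.sqrt_le_sqrt e3
    have e4step : Real.sqrt (∫ z, ((Real.sqrt (S.p t z) - Real.sqrt (p0 z)) / t) ^ 2 ∂ν) ≤ Real.sqrt (QQ t) + Nh := by
      have htri : eLpNorm (fun z => ((Real.sqrt (S.p t z) - Real.sqrt (p0 z)) / t)) 2 ν
          ≤ eLpNorm (fun z => ((Real.sqrt (S.p t z) - Real.sqrt (p0 z)) / t - 1/2 * s' z * Real.sqrt (p0 z))) 2 ν + eLpNorm (fun z => (1/2 * s' z * Real.sqrt (p0 z))) 2 ν := by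
        have heq : (fun z => ((Real.sqrt (S.p t z) - Real.sqrt (p0 z)) / t))
            = (fun z => ((Real.sqrt (S.p t z) - Real.sqrt (p0 z)) / t - 1/2 * s' z * Real.sqrt (p0 z))) + fun z => (1/2 * s' z * Real.sqrt (p0 z)) := by
          funext z; simp only [Pi.add_apply]; ring
        rw [heq]
        exact eLpNorm_add_le hAmeas.aestronglyMeasurable hh0meas.aestronglyMeasurable one_le_two
      have hQQr : Real.sqrt (QQ t) = (eLpNorm (fun z => ((Real.sqrt (S.p t z) - Real.sqrt (p0 z)) / t - 1/2 * s' z * Real.sqrt (p0 z))) 2 ν).toReal := by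
        rw [hQQts]; exact N_eq hAmeas.aestronglyMeasurable
      rw [N_eq hgmeas.aestronglyMeasurable, hQQr, hNh_eq]
      calc (eLpNorm (fun z => ((Real.sqrt (S.p t z) - Real.sqrt (p0 z)) / t)) 2 ν).toReal
          ≤ (eLpNorm (fun z => ((Real.sqrt (S.p t z) - Real.sqrt (p0 z)) / t - 1/2 * s' z * Real.sqrt (p0 z))) 2 ν + eLpNorm (fun z => (1/2 * s' z * Real.sqrt (p0 z))) 2 ν).toReal :=
            ENNReal.toReal_mono (ENNReal.add_ne_top.mpr ⟨hAmem.2.ne, hh0mem.2.ne⟩) htri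
        _ = (eLpNorm (fun z => ((Real.sqrt (S.p t z) - Real.sqrt (p0 z)) / t - 1/2 * s' z * Real.sqrt (p0 z))) 2 ν).toReal + (eLpNorm (fun z => (1/2 * s' z * Real.sqrt (p0 z))) 2 ν).toReal :=
            ENNReal.toReal_add hAmem.2.ne hh0mem.2.ne
    have e4 : Real.sqrt (∫ z, (Real.sqrt (S.p t z) - Real.sqrt (p0 z)) ^ 2 ∂ν) ≤ |t| * (Real.sqrt (QQ t) + Nh) := by
      have hd2 : ∫ z, (Real.sqrt (S.p t z) - Real.sqrt (p0 z)) ^ 2 ∂ν = t ^ 2 * ∫ z, ((Real.sqrt (S.p t z) - Real.sqrt (p0 z)) / t) ^ 2 ∂ν := by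
        rw [← integral_const_mul]
        refine integral_congr_ae (Eventually.of_forall fun z => ?_)
        field_simp
      rw [hd2, Real.sqrt_mul (sq_nonneg t), Real.sqrt_sq_eq_abs]
      exact mul_le_mul_of_nonneg_left e4step (abs_nonneg t)
    have b2 : |∫ z, (Dt t z * (1/2 * s' z * Real.sqrt (p0 z))) * (Real.sqrt (S.p t z) - Real.sqrt (p0 z)) ∂ν| ≤ C * Nh * (|t| * (Real.sqrt (QQ t) + Nh)) :=
      c2.trans (mul_le_mul s3 e4 (Real.sqrt_nonneg _) (mul_nonneg hCnn hNh0))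
    -- bound 3
    have c3 := cs hDDr0mem h2h0mem
    have e5 : Real.sqrt (∫ z, ((Dt t z - D z) * Real.sqrt (p0 z)) ^ 2 ∂ν)
        = (eLpNorm (fun z => Dt t z - D z) 2 P0).toReal := by
      rw [N_eq (f := fun z => (Dt t z - D z) * Real.sqrt (p0 z)) ((((hDt_meas t).sub hD_meas).mul hr0meas).aestronglyMeasurable),
        eLpNorm_mul_sqrt hp0_meas (f := fun z => Dt t z - D z) ((hDt_meas t).sub hD_meas), ← hP0d]
    have e6 : Real.sqrt (∫ z, (2 * (1/2 * s' z * Real.sqrt (p0 z))) ^ 2 ∂ν) = 2 * Nh := by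
      have h1 : ∫ z, (2 * (1/2 * s' z * Real.sqrt (p0 z))) ^ 2 ∂ν = 2 ^ 2 * ∫ z, (1/2 * s' z * Real.sqrt (p0 z)) ^ 2 ∂ν := by
        rw [← integral_const_mul]
        refine integral_congr_ae (Eventually.of_forall fun z => ?_)
        ring
      rw [h1, Real.sqrt_mul (sq_nonneg 2), Real.sqrt_sq (by norm_num : (0:ℝ) ≤ 2), hNhdef]
    have b3 : |∫ z, ((Dt t z - D z) * Real.sqrt (p0 z)) * (2 * (1/2 * s' z * Real.sqrt (p0 z))) ∂ν| ≤ (eLpNorm (fun z => Dt t z - D z) 2 P0).toReal * (2 * Nh) := by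
      refine c3.trans (le_of_eq ?_)
      rw [e5, e6]
    rw [Real.dist_eq,
      show slope (fun u => ∫ z, Dt u z ∂P0) 0 t - (-∫ z, D z * s z ∂P0)
          = -((∫ z, (Dt t z * ((Real.sqrt (S.p t z) - Real.sqrt (p0 z)) / t - 1/2 * s' z * Real.sqrt (p0 z))) * (Real.sqrt (S.p t z) + Real.sqrt (p0 z)) ∂ν) + (∫ z, (Dt t z * (1/2 * s' z * Real.sqrt (p0 z))) * (Real.sqrt (S.p t z) - Real.sqrt (p0 z)) ∂ν) + (∫ z, ((Dt t z - D z) * Real.sqrt (p0 z)) * (2 * (1/2 * s' z * Real.sqrt (p0 z))) ∂ν)) from by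
        rw [hsplit, hLeq]; ring,
      abs_neg]
    calc |(∫ z, (Dt t z * ((Real.sqrt (S.p t z) - Real.sqrt (p0 z)) / t - 1/2 * s' z * Real.sqrt (p0 z))) * (Real.sqrt (S.p t z) + Real.sqrt (p0 z)) ∂ν) + (∫ z, (Dt t z * (1/2 * s' z * Real.sqrt (p0 z))) * (Real.sqrt (S.p t z) - Real.sqrt (p0 z)) ∂ν) + (∫ z, ((Dt t z - D z) * Real.sqrt (p0 z)) * (2 * (1/2 * s' z * Real.sqrt (p0 z))) ∂ν)|
        ≤ |(∫ z, (Dt t z * ((Real.sqrt (S.p t z) - Real.sqrt (p0 z)) / t - 1/2 * s' z * Real.sqrt (p0 z))) * (Real.sqrt (S.p t z) + Real.sqrt (p0 z)) ∂ν) + (∫ z, (Dt t z * (1/2 * s' z * Real.sqrt (p0 z))) * (Real.sqrt (S.p t z) - Real.sqrt (p0 z)) ∂ν)| + |∫ z, ((Dt t z - D z) * Real.sqrt (p0 z)) * (2 * (1/2 * s' z * Real.sqrt (p0 z))) ∂ν| := abs_add_le _ _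
      _ ≤ |∫ z, (Dt t z * ((Real.sqrt (S.p t z) - Real.sqrt (p0 z)) / t - 1/2 * s' z * Real.sqrt (p0 z))) * (Real.sqrt (S.p t z) + Real.sqrt (p0 z)) ∂ν| + |∫ z, (Dt t z * (1/2 * s' z * Real.sqrt (p0 z))) * (Real.sqrt (S.p t z) - Real.sqrt (p0 z)) ∂ν| + |∫ z, ((Dt t z - D z) * Real.sqrt (p0 z)) * (2 * (1/2 * s' z * Real.sqrt (p0 z))) ∂ν| := by
          have h := abs_add_le (∫ z, (Dt t z * ((Real.sqrt (S.p t z) - Real.sqrt (p0 z)) / t - 1/2 * s' z * Real.sqrt (p0 z))) * (Real.sqrt (S.p t z) + Real.sqrt (p0 z)) ∂ν) (∫ z, (Dt t z * (1/2 * s' z * Real.sqrt (p0 z))) * (Real.sqrt (S.p t z) - Real.sqrt (p0 z)) ∂ν)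
          linarith
      _ ≤ C * Real.sqrt (QQ t) * 2 + C * Nh * (|t| * (Real.sqrt (QQ t) + Nh))
          + (eLpNorm (fun z => Dt t z - D z) 2 P0).toReal * (2 * Nh) :=
          add_le_add (add_le_add b1 b2) b3

  rw [hasDerivAt_iff_tendsto_slope, tendsto_iff_dist_tendsto_zero]
  exact squeeze_zero' (Eventually.of_forall fun t => dist_nonneg) key hB

end Semiparam
end

section
/- Let 𝒫 be a set of distributions P for Z = (Y, X, A), each absolutely continuous with respect to a σ-finite measure ν with density p, such that under every P ∈ 𝒫 one has |Y| ≤ C_Y almost surely and π^P(x) := P(A=1|X=x) ∈ [ε, 1−ε] almost surely, for fixed constants C_Y < ∞ and ε > 0. Let β(P) := E_P[μ₁^P(X) − μ₀^P(X)] where μ_a^P(x) := E_P[Y|X=x,A=a]. Then for all P₁, P₂ ∈ 𝒫, |β(P₁) − β(P₂)| ≤ 4√2 · C_Y · (1 + 1/ε) · H(P₁, P₂), where H(P₁,P₂) := (1/√2)(∫(√p₁ − √p₂)² dν)^{1/2} is the Hellinger distance. -/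
/-! STATEMENT 14: the ATE functional is Hellinger Lipschitz:
|β(P₁) − β(P₂)| ≤ 4√2 C_Y (1 + 1/ε) H(P₁, P₂) for distributions with bounded
outcomes and propensities bounded away from 0 and 1. -/

open MeasureTheory Filter Topology Set ENNReal

set_option linter.unusedSectionVars false
set_option linter.unusedVariables false
set_option maxHeartbeats 2000000

namespace ATE

variable {X : Type*} [MeasurableSpace X]

/-- An observation `z = (y, x, a)`: real outcome, covariates, binary treatment. -/
abbrev Obs (X : Type*) := ℝ × X × Bool

/-- `μa` is (a version of) the conditional outcome mean `E_P[Y | X = x, A = a]`: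
it is measurable, integrable, and satisfies the defining conditional-expectation
identity against all measurable sets of covariate values. -/
def IsCondMean (P : Measure (Obs X)) (a : Bool) (μa : X → ℝ) : Prop :=
  Measurable μa ∧ Integrable (fun z : Obs X => μa z.2.1) P ∧
  ∀ B : Set X, MeasurableSet B →
    ∫ z in {z : Obs X | z.2.1 ∈ B ∧ z.2.2 = a}, z.1 ∂P
      = ∫ z in {z : Obs X | z.2.1 ∈ B ∧ z.2.2 = a}, μa z.2.1 ∂P

/-- `pi` is (a version of) the propensity score `P(A = 1 | X = x)`. -/
def IsPropensity (P : Measure (Obs X)) (pi : X → ℝ) : Prop :=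
  Measurable pi ∧
  ∀ B : Set X, MeasurableSet B →
    (P {z : Obs X | z.2.1 ∈ B ∧ z.2.2 = true}).toReal
      = ∫ z in {z : Obs X | z.2.1 ∈ B}, pi z.2.1 ∂P

/-- The AIPW estimating function
`m(z; b, (μ1, μ0, π)) = (a/π(x))(y − μ1(x)) − ((1−a)/(1−π(x)))(y − μ0(x)) + μ1(x) − μ0(x) − b`. -/
noncomputable def aipw (μ1 μ0 pi : X → ℝ) (b : ℝ) (z : Obs X) : ℝ :=
  (if z.2.2 then (1:ℝ) else 0) / pi z.2.1 * (z.1 - μ1 z.2.1)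
    - (1 - if z.2.2 then (1:ℝ) else 0) / (1 - pi z.2.1) * (z.1 - μ0 z.2.1)
    + μ1 z.2.1 - μ0 z.2.1 - b

/-- `p` is a density of `P` with respect to `ν`. -/
def IsDensityOf {Z : Type*} [MeasurableSpace Z] (ν P : Measure Z) (p : Z → ℝ) : Prop :=
  P = ν.withDensity (fun z => ENNReal.ofReal (p z))

/-- The Hellinger distance between two densities. -/
noncomputable def hellingerDist {Z : Type*} [MeasurableSpace Z]
    (ν : Measure Z) (p q : Z → ℝ) : ℝ :=
  (1 / Real.sqrt 2) * Real.sqrt (∫ z, (Real.sqrt (p z) - Real.sqrt (q z)) ^ 2 ∂ν)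

lemma meas_proj : Measurable (fun z : Obs X => z.2.1) := measurable_snd.fst
lemma meas_y : Measurable (fun z : Obs X => z.1) := measurable_fst

lemma measurableSet_trt (a : Bool) : MeasurableSet {z : Obs X | z.2.2 = a} := by
  have : {z : Obs X | z.2.2 = a} = (fun z : Obs X => z.2.2) ⁻¹' {a} := by ext z; simp
  rw [this]; exact measurable_snd.snd (measurableSet_singleton a)

lemma set_eq_inter (B : Set X) (a : Bool) :
    {z : Obs X | z.2.1 ∈ B ∧ z.2.2 = a}
      = (fun z : Obs X => z.2.1) ⁻¹' B ∩ {z : Obs X | z.2.2 = a} := rfl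

lemma measurableSet_BA {B : Set X} (hB : MeasurableSet B) (a : Bool) :
    MeasurableSet {z : Obs X | z.2.1 ∈ B ∧ z.2.2 = a} := by
  rw [set_eq_inter]; exact (meas_proj hB).inter (measurableSet_trt a)

lemma integrable_of_aebdd {P : Measure (Obs X)} [IsFiniteMeasure P] {f : Obs X → ℝ}
    (hm : AEStronglyMeasurable f P) {M : ℝ} (hb : ∀ᵐ z ∂P, |f z| ≤ M) : Integrable f P :=
  Integrable.mono' (integrable_const M) hm (by filter_upwards [hb] with z h; simpa using h)

lemma integral_proj_congr {Q1 Q2 : Measure (Obs X)}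
    (hQ : ∀ B : Set X, MeasurableSet B →
      Q1 ((fun z : Obs X => z.2.1) ⁻¹' B) = Q2 ((fun z : Obs X => z.2.1) ⁻¹' B))
    (h : X → ℝ) (hm : Measurable h) :
    ∫ z, h z.2.1 ∂Q1 = ∫ z, h z.2.1 ∂Q2 := by
  have hmap : Q1.map (fun z : Obs X => z.2.1) = Q2.map (fun z : Obs X => z.2.1) := by
    ext B hB
    rw [Measure.map_apply meas_proj hB, Measure.map_apply meas_proj hB]
    exact hQ B hB
  have h1 := integral_map (μ := Q1) meas_proj.aemeasurable (f := h) hm.aestronglyMeasurable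
  have h2 := integral_map (μ := Q2) meas_proj.aemeasurable (f := h) hm.aestronglyMeasurable
  rw [← h1, ← h2, hmap]

/-- Extension of the propensity identity to bounded measurable weights. -/
lemma propensity_ext {P : Measure (Obs X)} [IsProbabilityMeasure P]
    {pit : X → ℝ} {eps : ℝ} (heps : 0 < eps)
    (hm : Measurable pit) (hrange : ∀ x, pit x ∈ Icc eps (1 - eps))
    (hident : ∀ B : Set X, MeasurableSet B →
      (P {z : Obs X | z.2.1 ∈ B ∧ z.2.2 = true}).toReal
        = ∫ z in {z : Obs X | z.2.1 ∈ B}, pit z.2.1 ∂P)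
    (h : X → ℝ) (hhm : Measurable h) :
    ∫ z in {z : Obs X | z.2.2 = true}, h z.2.1 ∂P = ∫ z, pit z.2.1 * h z.2.1 ∂P := by
  have hnn : ∀ x, 0 ≤ pit x := fun x => le_trans heps.le (hrange x).1
  set Q1 := P.restrict {z : Obs X | z.2.2 = true} with hQ1
  set Q2 := P.withDensity (fun z : Obs X => ENNReal.ofReal (pit z.2.1)) with hQ2
  have hQ : ∀ B : Set X, MeasurableSet B →
      Q1 ((fun z : Obs X => z.2.1) ⁻¹' B) = Q2 ((fun z : Obs X => z.2.1) ⁻¹' B) := by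
    intro B hB
    have hint : Integrable (fun z : Obs X => pit z.2.1)
        (P.restrict ((fun z : Obs X => z.2.1) ⁻¹' B)) := by
      refine integrable_of_aebdd ((hm.comp meas_proj).aestronglyMeasurable) (M := 1 - eps) ?_
      exact Eventually.of_forall fun z => by
        have := hrange z.2.1
        rw [abs_le]; constructor <;> [linarith [this.1]; exact this.2]
    have h2 : Q2 ((fun z : Obs X => z.2.1) ⁻¹' B)
        = ENNReal.ofReal (∫ z in (fun z : Obs X => z.2.1) ⁻¹' B, pit z.2.1 ∂P) := by
      rw [hQ2, withDensity_apply _ (meas_proj hB)]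
      rw [← ofReal_integral_eq_lintegral_ofReal hint
        (Eventually.of_forall fun z => hnn z.2.1)]
    have h1 : Q1 ((fun z : Obs X => z.2.1) ⁻¹' B)
        = P {z : Obs X | z.2.1 ∈ B ∧ z.2.2 = true} := by
      rw [hQ1, Measure.restrict_apply (meas_proj hB), ← set_eq_inter]
    rw [h1, h2]
    rw [show ((fun z : Obs X => z.2.1) ⁻¹' B) = {z : Obs X | z.2.1 ∈ B} from rfl]
    rw [← hident B hB, ENNReal.ofReal_toReal (measure_ne_top _ _)]
  have key := integral_proj_congr hQ h hhm
  rw [hQ1] at key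
  rw [key, hQ2]
  have hdm : Measurable fun z : Obs X => (pit z.2.1).toNNReal :=
    (hm.comp meas_proj).real_toNNReal
  have hd : (fun z : Obs X => ENNReal.ofReal (pit z.2.1))
      = fun z : Obs X => ((fun z : Obs X => (pit z.2.1).toNNReal) z : ℝ≥0∞) := rfl
  rw [hd, integral_withDensity_eq_integral_smul hdm]
  refine integral_congr_ae (Eventually.of_forall fun z => ?_)
  simp only [NNReal.smul_def, Real.coe_toNNReal _ (hnn z.2.1), smul_eq_mul]

/-- False-arm version. -/
lemma propensity_ext_false {P : Measure (Obs X)} [IsProbabilityMeasure P]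
    {pit : X → ℝ} {eps : ℝ} (heps : 0 < eps)
    (hm : Measurable pit) (hrange : ∀ x, pit x ∈ Icc eps (1 - eps))
    (hident : ∀ B : Set X, MeasurableSet B →
      (P {z : Obs X | z.2.1 ∈ B ∧ z.2.2 = true}).toReal
        = ∫ z in {z : Obs X | z.2.1 ∈ B}, pit z.2.1 ∂P)
    (h : X → ℝ) (hhm : Measurable h) (M : ℝ) (hM : ∀ x, |h x| ≤ M) :
    ∫ z in {z : Obs X | z.2.2 = false}, h z.2.1 ∂P
      = ∫ z, (1 - pit z.2.1) * h z.2.1 ∂P := by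
  have hcompl : {z : Obs X | z.2.2 = true}ᶜ = {z : Obs X | z.2.2 = false} := by
    ext z; simp
  have hinth : Integrable (fun z : Obs X => h z.2.1) P :=
    integrable_of_aebdd ((hhm.comp meas_proj).aestronglyMeasurable)
      (Eventually.of_forall fun z => hM z.2.1)
  have hsplit := integral_add_compl (measurableSet_trt (X := X) true) hinth
  rw [hcompl] at hsplit
  have htrue := propensity_ext heps hm hrange hident h hhm
  have hintph : Integrable (fun z : Obs X => pit z.2.1 * h z.2.1) P := by
    refine integrable_of_aebdd
      (((hm.comp meas_proj).mul (hhm.comp meas_proj)).aestronglyMeasurable)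
      (M := (1 - eps) * M) (Eventually.of_forall fun z => ?_)
    rw [abs_mul]
    have h1 := hrange z.2.1
    have h2 := hM z.2.1
    have : |pit z.2.1| ≤ 1 - eps := by
      rw [abs_le]; constructor <;> [linarith [h1.1]; exact h1.2]
    exact mul_le_mul this h2 (abs_nonneg _) (by linarith [heps, h1.1, h1.2])
  have : ∫ z in {z : Obs X | z.2.2 = false}, h z.2.1 ∂P
      = ∫ z, h z.2.1 ∂P - ∫ z, pit z.2.1 * h z.2.1 ∂P := by
    rw [← htrue]; linarith [hsplit]
  rw [this, ← integral_sub hinth hintph]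
  congr 1; ext z; ring

/-- Extension of the conditional-mean identity to bounded measurable weights. -/
lemma condmean_ext {P : Measure (Obs X)} [IsProbabilityMeasure P] {a : Bool}
    {mt : X → ℝ} {C : ℝ}
    (hmm : Measurable mt) (hmb : ∀ x, |mt x| ≤ C)
    (hY : ∀ᵐ z ∂P, |z.1| ≤ C)
    (hident : ∀ B : Set X, MeasurableSet B →
      ∫ z in {z : Obs X | z.2.1 ∈ B ∧ z.2.2 = a}, z.1 ∂P
        = ∫ z in {z : Obs X | z.2.1 ∈ B ∧ z.2.2 = a}, mt z.2.1 ∂P)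
    (h : X → ℝ) (hhm : Measurable h) (M : ℝ) (hM : ∀ x, |h x| ≤ M) :
    ∫ z in {z : Obs X | z.2.2 = a}, h z.2.1 * z.1 ∂P
      = ∫ z in {z : Obs X | z.2.2 = a}, h z.2.1 * mt z.2.1 ∂P := by
  set Sa := {z : Obs X | z.2.2 = a} with hSa
  set P' := P.restrict Sa with hP'
  haveI : IsFiniteMeasure P' := by rw [hP']; infer_instance
  have hY' : ∀ᵐ z ∂P', |z.1| ≤ C := ae_restrict_of_ae hY
  have hYint : Integrable (fun z : Obs X => z.1) P' :=
    integrable_of_aebdd meas_y.aestronglyMeasurable hY'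
  have hmint : Integrable (fun z : Obs X => mt z.2.1) P' :=
    integrable_of_aebdd ((hmm.comp meas_proj).aestronglyMeasurable)
      (Eventually.of_forall fun z => hmb z.2.1)
  -- the two withDensity measures
  set Q1 := P'.withDensity (fun z : Obs X => ENNReal.ofReal (z.1 + C)) with hQ1
  set Q2 := P'.withDensity (fun z : Obs X => ENNReal.ofReal (mt z.2.1 + C)) with hQ2
  have hQ : ∀ B : Set X, MeasurableSet B →
      Q1 ((fun z : Obs X => z.2.1) ⁻¹' B) = Q2 ((fun z : Obs X => z.2.1) ⁻¹' B) := by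
    intro B hB
    have hrr : P'.restrict ((fun z : Obs X => z.2.1) ⁻¹' B)
        = P.restrict {z : Obs X | z.2.1 ∈ B ∧ z.2.2 = a} := by
      rw [hP', Measure.restrict_restrict (meas_proj hB), ← set_eq_inter]
    have hY'' : ∀ᵐ z ∂(P'.restrict ((fun z : Obs X => z.2.1) ⁻¹' B)), |z.1| ≤ C := by
      rw [hrr]; exact ae_restrict_of_ae hY
    have hyint' : Integrable (fun z : Obs X => z.1 + C)
        (P'.restrict ((fun z : Obs X => z.2.1) ⁻¹' B)) := by
      refine Integrable.add ?_ (integrable_const C)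
      exact integrable_of_aebdd meas_y.aestronglyMeasurable hY''
    have hmint' : Integrable (fun z : Obs X => mt z.2.1 + C)
        (P'.restrict ((fun z : Obs X => z.2.1) ⁻¹' B)) := by
      refine Integrable.add ?_ (integrable_const C)
      exact integrable_of_aebdd ((hmm.comp meas_proj).aestronglyMeasurable)
        (Eventually.of_forall fun z => hmb z.2.1)
    rw [hQ1, hQ2, withDensity_apply _ (meas_proj hB), withDensity_apply _ (meas_proj hB)]
    rw [← ofReal_integral_eq_lintegral_ofReal hyint'
      (by filter_upwards [hY''] with z hz
          show (0:ℝ) ≤ z.1 + C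
          linarith [abs_le.mp hz |>.1])]
    rw [← ofReal_integral_eq_lintegral_ofReal hmint'
      (Eventually.of_forall fun z => by
          show (0:ℝ) ≤ mt z.2.1 + C
          linarith [abs_le.mp (hmb z.2.1) |>.1])]
    congr 1
    have e1 : ∫ z in (fun z : Obs X => z.2.1) ⁻¹' B, (z.1 + C) ∂P'
        = ∫ z in {z : Obs X | z.2.1 ∈ B ∧ z.2.2 = a}, (z.1 + C) ∂P := by rw [hrr]
    have e2 : ∫ z in (fun z : Obs X => z.2.1) ⁻¹' B, (mt z.2.1 + C) ∂P'
        = ∫ z in {z : Obs X | z.2.1 ∈ B ∧ z.2.2 = a}, (mt z.2.1 + C) ∂P := by rw [hrr]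
    rw [e1, e2]
    have hyB : Integrable (fun z : Obs X => z.1)
        (P.restrict {z : Obs X | z.2.1 ∈ B ∧ z.2.2 = a}) :=
      integrable_of_aebdd meas_y.aestronglyMeasurable (ae_restrict_of_ae hY)
    have hmB : Integrable (fun z : Obs X => mt z.2.1)
        (P.restrict {z : Obs X | z.2.1 ∈ B ∧ z.2.2 = a}) :=
      integrable_of_aebdd ((hmm.comp meas_proj).aestronglyMeasurable)
        (Eventually.of_forall fun z => hmb z.2.1)
    rw [integral_add hyB (integrable_const C), integral_add hmB (integrable_const C),
      hident B hB]
  have key := integral_proj_congr hQ h hhm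
  have hdm1 : Measurable fun z : Obs X => (z.1 + C).toNNReal :=
    (meas_y.add_const C).real_toNNReal
  have hdm2 : Measurable fun z : Obs X => (mt z.2.1 + C).toNNReal :=
    ((hmm.comp meas_proj).add_const C).real_toNNReal
  have hd1 : (fun z : Obs X => ENNReal.ofReal (z.1 + C))
      = fun z : Obs X => ((fun z : Obs X => (z.1 + C).toNNReal) z : ℝ≥0∞) := rfl
  have hd2 : (fun z : Obs X => ENNReal.ofReal (mt z.2.1 + C))
      = fun z : Obs X => ((fun z : Obs X => (mt z.2.1 + C).toNNReal) z : ℝ≥0∞) := rfl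
  rw [hQ1, hQ2, hd1, hd2, integral_withDensity_eq_integral_smul hdm1,
    integral_withDensity_eq_integral_smul hdm2] at key
  have e1 : ∫ z, (z.1 + C) * h z.2.1 ∂P'
      = ∫ x, (x.1 + C).toNNReal • h x.2.1 ∂P' := by
    refine integral_congr_ae ?_
    filter_upwards [hY'] with z hz
    have h0 : (0:ℝ) ≤ z.1 + C := by linarith [abs_le.mp hz |>.1]
    simp [NNReal.smul_def, Real.coe_toNNReal _ h0]
  have e2 : ∫ x, (mt x.2.1 + C).toNNReal • h x.2.1 ∂P'
      = ∫ z, (mt z.2.1 + C) * h z.2.1 ∂P' := by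
    refine integral_congr_ae (Eventually.of_forall fun z => ?_)
    have h0 : (0:ℝ) ≤ mt z.2.1 + C := by linarith [abs_le.mp (hmb z.2.1) |>.1]
    simp [NNReal.smul_def, Real.coe_toNNReal _ h0]
  have key2 := e1.trans (key.trans e2)
  have hinthC : Integrable (fun z : Obs X => C * h z.2.1) P' :=
    integrable_of_aebdd (((measurable_const (a := C)).mul
      (hhm.comp meas_proj)).aestronglyMeasurable)
      (M := |C| * M) (Eventually.of_forall fun z => by
        rw [abs_mul]
        exact mul_le_mul_of_nonneg_left (hM z.2.1) (abs_nonneg C))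
  have hinthy : Integrable (fun z : Obs X => z.1 * h z.2.1) P' :=
    integrable_of_aebdd ((meas_y.mul (hhm.comp meas_proj)).aestronglyMeasurable)
      (M := C * M) (by
        filter_upwards [hY'] with z hz
        rw [abs_mul]
        exact mul_le_mul hz (hM z.2.1) (abs_nonneg _) (le_trans (abs_nonneg _) hz))
  have hintmh : Integrable (fun z : Obs X => mt z.2.1 * h z.2.1) P' :=
    integrable_of_aebdd (((hmm.comp meas_proj).mul (hhm.comp meas_proj)).aestronglyMeasurable)
      (M := C * M) (Eventually.of_forall fun z => by
        rw [abs_mul]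
        exact mul_le_mul (hmb z.2.1) (hM z.2.1) (abs_nonneg _)
          (le_trans (abs_nonneg _) (hmb z.2.1)))
  have l : ∫ z, (z.1 + C) * h z.2.1 ∂P'
      = ∫ z, z.1 * h z.2.1 ∂P' + ∫ z, C * h z.2.1 ∂P' := by
    rw [← integral_add hinthy hinthC]
    congr 1; ext z; ring
  have r : ∫ z, (mt z.2.1 + C) * h z.2.1 ∂P'
      = ∫ z, mt z.2.1 * h z.2.1 ∂P' + ∫ z, C * h z.2.1 ∂P' := by
    rw [← integral_add hintmh hinthC]
    congr 1; ext z; ring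
  have main : ∫ z, z.1 * h z.2.1 ∂P' = ∫ z, mt z.2.1 * h z.2.1 ∂P' := by
    rw [l, r] at key2; linarith
  calc ∫ z in Sa, h z.2.1 * z.1 ∂P = ∫ z, z.1 * h z.2.1 ∂P' := by
        rw [hP']
        exact integral_congr_ae (Eventually.of_forall fun z => mul_comm _ _)
    _ = ∫ z, mt z.2.1 * h z.2.1 ∂P' := main
    _ = ∫ z in Sa, h z.2.1 * mt z.2.1 ∂P := by
        rw [hP']
        exact integral_congr_ae (Eventually.of_forall fun z => mul_comm _ _)
/-- The conditional mean of an a.e.-bounded outcome is a.e. bounded on its arm. -/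
lemma condmean_bdd {P : Measure (Obs X)} [IsProbabilityMeasure P] {a : Bool}
    {ma : X → ℝ} {C : ℝ}
    (hmm : Measurable ma) (hmi : Integrable (fun z : Obs X => ma z.2.1) P)
    (hY : ∀ᵐ z ∂P, |z.1| ≤ C)
    (hident : ∀ B : Set X, MeasurableSet B →
      ∫ z in {z : Obs X | z.2.1 ∈ B ∧ z.2.2 = a}, z.1 ∂P
        = ∫ z in {z : Obs X | z.2.1 ∈ B ∧ z.2.2 = a}, ma z.2.1 ∂P) :
    P {z : Obs X | C < |ma z.2.1| ∧ z.2.2 = a} = 0 := by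
  -- upper pieces
  have upper : ∀ r : ℝ, C < r → P {z : Obs X | z.2.1 ∈ {x | r ≤ ma x} ∧ z.2.2 = a} = 0 := by
    intro r hr
    set B : Set X := {x | r ≤ ma x} with hBdef
    have hB : MeasurableSet B := hmm measurableSet_Ici
    set T := {z : Obs X | z.2.1 ∈ B ∧ z.2.2 = a} with hT
    have hTm : MeasurableSet T := measurableSet_BA hB a
    set m := (P T).toReal with hm
    have hm0 : 0 ≤ m := ENNReal.toReal_nonneg
    have hyT : Integrable (fun z : Obs X => z.1) (P.restrict T) :=
      integrable_of_aebdd meas_y.aestronglyMeasurable (ae_restrict_of_ae hY)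
    have h1 : ∫ z in T, z.1 ∂P ≤ C * m := by
      have : ∫ z in T, z.1 ∂P ≤ ∫ z in T, C ∂P := by
        refine integral_mono_ae hyT (integrable_const C) ?_
        filter_upwards [ae_restrict_of_ae hY] with z hz
        exact (abs_le.mp hz).2
      rwa [setIntegral_const, smul_eq_mul, mul_comm] at this
    have h2 : r * m ≤ ∫ z in T, ma z.2.1 ∂P := by
      refine setIntegral_ge_of_const_le_real hTm (measure_ne_top _ _) ?_ hmi.integrableOn
      intro z hz
      exact hz.1
    rw [← hident B hB] at h2
    have : (r - C) * m ≤ 0 := by nlinarith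
    have hmz : m = 0 := le_antisymm (by nlinarith) hm0
    rw [hm] at hmz
    exact (ENNReal.toReal_eq_zero_iff _).mp hmz |>.resolve_right (measure_ne_top _ _)
  have lower : ∀ r : ℝ, C < r → P {z : Obs X | z.2.1 ∈ {x | ma x ≤ -r} ∧ z.2.2 = a} = 0 := by
    intro r hr
    set B : Set X := {x | ma x ≤ -r} with hBdef
    have hB : MeasurableSet B := hmm measurableSet_Iic
    set T := {z : Obs X | z.2.1 ∈ B ∧ z.2.2 = a} with hT
    have hTm : MeasurableSet T := measurableSet_BA hB a
    set m := (P T).toReal with hm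
    have hm0 : 0 ≤ m := ENNReal.toReal_nonneg
    have hyT : Integrable (fun z : Obs X => z.1) (P.restrict T) :=
      integrable_of_aebdd meas_y.aestronglyMeasurable (ae_restrict_of_ae hY)
    have h1 : -C * m ≤ ∫ z in T, z.1 ∂P := by
      have : ∫ z in T, (-C) ∂P ≤ ∫ z in T, z.1 ∂P := by
        refine integral_mono_ae (integrable_const (-C)) hyT ?_
        filter_upwards [ae_restrict_of_ae hY] with z hz
        exact (abs_le.mp hz).1
      rwa [setIntegral_const, smul_eq_mul, mul_comm] at this
    have h2 : ∫ z in T, ma z.2.1 ∂P ≤ -r * m := by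
      have : ∫ z in T, ma z.2.1 ∂P ≤ ∫ z in T, (-r) ∂P := by
        refine setIntegral_mono_on hmi.integrableOn (integrable_const (-r)) hTm ?_
        intro z hz
        exact hz.1
      rwa [setIntegral_const, smul_eq_mul, mul_comm] at this
    rw [← hident B hB] at h2
    have hmz : m = 0 := le_antisymm (by nlinarith) hm0
    rw [hm] at hmz
    exact (ENNReal.toReal_eq_zero_iff _).mp hmz |>.resolve_right (measure_ne_top _ _)
  -- countable union
  have hsub : {z : Obs X | C < |ma z.2.1| ∧ z.2.2 = a} ⊆
      ⋃ n : ℕ, ({z : Obs X | z.2.1 ∈ {x | C + 1/(n+1) ≤ ma x} ∧ z.2.2 = a}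
        ∪ {z : Obs X | z.2.1 ∈ {x | ma x ≤ -(C + 1/(n+1))} ∧ z.2.2 = a}) := by
    intro z hz
    obtain ⟨hz1, hz2⟩ := hz
    obtain ⟨n, hn⟩ := exists_nat_one_div_lt (by linarith : (0:ℝ) < |ma z.2.1| - C)
    have hn' : C + 1/(n+1) ≤ |ma z.2.1| := by
      have : (1:ℝ)/(n+1) < |ma z.2.1| - C := by exact_mod_cast hn
      linarith
    refine mem_iUnion.mpr ⟨n, ?_⟩
    rcases abs_cases (ma z.2.1) with ⟨he, _⟩ | ⟨he, _⟩
    · left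
      refine ⟨?_, hz2⟩
      show C + 1/((n:ℝ)+1) ≤ ma z.2.1
      rw [he] at hn'; exact hn'
    · right
      refine ⟨?_, hz2⟩
      show ma z.2.1 ≤ -(C + 1/((n:ℝ)+1))
      rw [he] at hn'
      linarith
  refine measure_mono_null hsub (measure_iUnion_null fun n => ?_)
  have hpos : (0:ℝ) < 1/((n:ℝ)+1) := by positivity
  exact measure_union_null (upper _ (by linarith)) (lower _ (by linarith))

/-- If an `X`-event is null on one arm, it is null (propensity bounded away from 0 and 1). -/
lemma proj_null_of_arm_null {P : Measure (Obs X)} [IsProbabilityMeasure P]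
    {pit : X → ℝ} {eps : ℝ} (heps : 0 < eps)
    (hm : Measurable pit) (hrange : ∀ x, pit x ∈ Icc eps (1 - eps))
    (hident : ∀ B : Set X, MeasurableSet B →
      (P {z : Obs X | z.2.1 ∈ B ∧ z.2.2 = true}).toReal
        = ∫ z in {z : Obs X | z.2.1 ∈ B}, pit z.2.1 ∂P)
    {N : Set X} (hN : MeasurableSet N) {a : Bool}
    (h0 : P {z : Obs X | z.2.1 ∈ N ∧ z.2.2 = a} = 0) :
    P {z : Obs X | z.2.1 ∈ N} = 0 := by
  have hNproj : MeasurableSet {z : Obs X | z.2.1 ∈ N} := meas_proj hN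
  set u := (P {z : Obs X | z.2.1 ∈ N}).toReal with hu
  have hu0 : 0 ≤ u := ENNReal.toReal_nonneg
  have hintp : Integrable (fun z : Obs X => pit z.2.1)
      (P.restrict {z : Obs X | z.2.1 ∈ N}) := by
    refine integrable_of_aebdd ((hm.comp meas_proj).aestronglyMeasurable) (M := 1 - eps)
      (Eventually.of_forall fun z => ?_)
    have h1 := hrange z.2.1
    rw [abs_le]; exact ⟨by linarith [h1.1], h1.2⟩
  have hlow : eps * u ≤ ∫ z in {z : Obs X | z.2.1 ∈ N}, pit z.2.1 ∂P := by
    refine setIntegral_ge_of_const_le_real hNproj (measure_ne_top _ _)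
      (fun z _ => (hrange z.2.1).1) hintp
  have hhigh : ∫ z in {z : Obs X | z.2.1 ∈ N}, pit z.2.1 ∂P ≤ (1 - eps) * u := by
    have : ∫ z in {z : Obs X | z.2.1 ∈ N}, pit z.2.1 ∂P
        ≤ ∫ z in {z : Obs X | z.2.1 ∈ N}, (1 - eps) ∂P :=
      setIntegral_mono_on hintp (integrable_const _) hNproj fun z _ => (hrange z.2.1).2
    rwa [setIntegral_const, smul_eq_mul, mul_comm] at this
  have hid := hident N hN
  have huz : u = 0 := by
    cases a with
    | true =>
        rw [h0] at hid
        simp at hid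
        rw [← hid] at hlow
        nlinarith
    | false =>
        have hdecomp : {z : Obs X | z.2.1 ∈ N}
            = {z : Obs X | z.2.1 ∈ N ∧ z.2.2 = true} ∪ {z : Obs X | z.2.1 ∈ N ∧ z.2.2 = false} := by
          ext z
          simp only [mem_setOf_eq, mem_union]
          rcases Bool.dichotomy z.2.2 with h | h <;> simp [h]
        have := measure_union_le (μ := P) {z : Obs X | z.2.1 ∈ N ∧ z.2.2 = true}
          {z : Obs X | z.2.1 ∈ N ∧ z.2.2 = false}
        rw [← hdecomp, h0, add_zero] at this
        have hmono : P {z : Obs X | z.2.1 ∈ N ∧ z.2.2 = true} ≤ P {z : Obs X | z.2.1 ∈ N} :=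
          measure_mono fun z hz => hz.1
        have heq : P {z : Obs X | z.2.1 ∈ N} = P {z : Obs X | z.2.1 ∈ N ∧ z.2.2 = true} :=
          le_antisymm this hmono
        have h3 : u = ∫ z in {z : Obs X | z.2.1 ∈ N}, pit z.2.1 ∂P := by
          rw [hu, heq]; exact hid
        have : u ≤ (1 - eps) * u := h3 ▸ (h3 ▸ hhigh)
        nlinarith
  rw [hu] at huz
  exact (ENNReal.toReal_eq_zero_iff _).mp huz |>.resolve_right (measure_ne_top _ _)
section Clamp

variable {P : Measure (Obs X)} [IsProbabilityMeasure P] {eps C : ℝ}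

/-- Clamped propensity satisfies the identity. -/
lemma clamp_prop_ident (heps : 0 < eps) {pi : X → ℝ} (hpi_meas : Measurable pi)
    (hident : ∀ B : Set X, MeasurableSet B →
      (P {z : Obs X | z.2.1 ∈ B ∧ z.2.2 = true}).toReal
        = ∫ z in {z : Obs X | z.2.1 ∈ B}, pi z.2.1 ∂P)
    (hrange : ∀ᵐ z ∂P, pi z.2.1 ∈ Icc eps (1 - eps)) :
    ∀ B : Set X, MeasurableSet B →
      (P {z : Obs X | z.2.1 ∈ B ∧ z.2.2 = true}).toReal
        = ∫ z in {z : Obs X | z.2.1 ∈ B}, max eps (min (1 - eps) (pi z.2.1)) ∂P := by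
  intro B hB
  rw [hident B hB]
  refine setIntegral_congr_ae (meas_proj hB) ?_
  filter_upwards [hrange] with z hz _
  rw [min_eq_right hz.2, max_eq_right hz.1]

lemma clamp_abs_le (hC : 0 ≤ C) (v : ℝ) : |max (-C) (min C v)| ≤ C := by
  rw [abs_le]
  exact ⟨le_max_left _ _, max_le (by linarith) (min_le_left _ _)⟩

lemma clamp_mem_Icc (heps2 : eps ≤ 1 - eps) (v : ℝ) :
    max eps (min (1 - eps) v) ∈ Icc eps (1 - eps) :=
  ⟨le_max_left _ _, max_le heps2 (min_le_left _ _)⟩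

/-- The clamped conditional mean agrees a.e. with the original one. -/
lemma clamp_mu_ae_eq (heps : 0 < eps) {pi : X → ℝ} (hpi_meas : Measurable pi)
    (hpident : ∀ B : Set X, MeasurableSet B →
      (P {z : Obs X | z.2.1 ∈ B ∧ z.2.2 = true}).toReal
        = ∫ z in {z : Obs X | z.2.1 ∈ B}, pi z.2.1 ∂P)
    (hprange : ∀ᵐ z ∂P, pi z.2.1 ∈ Icc eps (1 - eps))
    (heps2 : eps ≤ 1 - eps)
    {a : Bool} {ma : X → ℝ} (hmm : Measurable ma)
    (hmi : Integrable (fun z : Obs X => ma z.2.1) P)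
    (hY : ∀ᵐ z ∂P, |z.1| ≤ C)
    (hident : ∀ B : Set X, MeasurableSet B →
      ∫ z in {z : Obs X | z.2.1 ∈ B ∧ z.2.2 = a}, z.1 ∂P
        = ∫ z in {z : Obs X | z.2.1 ∈ B ∧ z.2.2 = a}, ma z.2.1 ∂P) :
    ∀ᵐ z ∂P, max (-C) (min C (ma z.2.1)) = ma z.2.1 := by
  set pit := fun x => max eps (min (1 - eps) (pi x)) with hpit
  have hpitm : Measurable pit := measurable_const.max (measurable_const.min hpi_meas)
  have hpitr : ∀ x, pit x ∈ Icc eps (1 - eps) := fun x => clamp_mem_Icc heps2 _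
  have hpitid := clamp_prop_ident heps hpi_meas hpident hprange
  have h0 : P {z : Obs X | C < |ma z.2.1| ∧ z.2.2 = a} = 0 :=
    condmean_bdd hmm hmi hY hident
  have h0' : P {z : Obs X | z.2.1 ∈ {x | C < |ma x|} ∧ z.2.2 = a} = 0 := h0
  have hN : MeasurableSet {x : X | C < |ma x|} := measurableSet_lt measurable_const hmm.abs
  have hnull : P {z : Obs X | z.2.1 ∈ {x | C < |ma x|}} = 0 :=
    proj_null_of_arm_null heps hpitm hpitr hpitid hN h0'
  have : ∀ᵐ z ∂P, z.2.1 ∉ {x : X | C < |ma x|} := by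
    rw [ae_iff]
    simpa using hnull
  filter_upwards [this] with z hz
  have habs : |ma z.2.1| ≤ C := not_lt.mp hz
  obtain ⟨hl, hr⟩ := abs_le.mp habs
  rw [min_eq_right hr, max_eq_right hl]

/-- The clamped conditional mean satisfies the identity. -/
lemma clamp_mu_ident {a : Bool} {ma : X → ℝ}
    (hae : ∀ᵐ z ∂P, max (-C) (min C (ma z.2.1)) = ma z.2.1)
    (hident : ∀ B : Set X, MeasurableSet B →
      ∫ z in {z : Obs X | z.2.1 ∈ B ∧ z.2.2 = a}, z.1 ∂P
        = ∫ z in {z : Obs X | z.2.1 ∈ B ∧ z.2.2 = a}, ma z.2.1 ∂P) :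
    ∀ B : Set X, MeasurableSet B →
      ∫ z in {z : Obs X | z.2.1 ∈ B ∧ z.2.2 = a}, z.1 ∂P
        = ∫ z in {z : Obs X | z.2.1 ∈ B ∧ z.2.2 = a}, max (-C) (min C (ma z.2.1)) ∂P := by
  intro B hB
  rw [hident B hB]
  refine setIntegral_congr_ae (measurableSet_BA hB a) ?_
  filter_upwards [hae] with z hz _
  exact hz.symm

end Clamp
section Phi

variable {P : Measure (Obs X)} [IsProbabilityMeasure P] {eps C : ℝ}
variable {pit : X → ℝ} {m1 : X → ℝ}

/-- Reduce the first AIPW term to set integrals over the treated arm. -/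
lemma integral_g1 (heps : 0 < eps)
    (hpitm : Measurable pit) (hpitr : ∀ x, pit x ∈ Icc eps (1 - eps))
    (hm1m : Measurable m1) (hm1b : ∀ x, |m1 x| ≤ C)
    (hY : ∀ᵐ z ∂P, |z.1| ≤ C) :
    ∫ z, (if z.2.2 then (1:ℝ) else 0) / pit z.2.1 * (z.1 - m1 z.2.1) ∂P
      = (∫ z in {z : Obs X | z.2.2 = true}, (1 / pit z.2.1) * z.1 ∂P)
        - ∫ z in {z : Obs X | z.2.2 = true}, (1 / pit z.2.1) * m1 z.2.1 ∂P := by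
  have hpitpos : ∀ x, 0 < pit x := fun x => lt_of_lt_of_le heps (hpitr x).1
  have hdivb : ∀ x, |1 / pit x| ≤ 1 / eps := by
    intro x
    rw [abs_of_pos (one_div_pos.mpr (hpitpos x))]
    exact one_div_le_one_div_of_le heps (hpitr x).1
  set g1 : Obs X → ℝ := fun z => (if z.2.2 then (1:ℝ) else 0) / pit z.2.1 * (z.1 - m1 z.2.1)
    with hg1
  have hg1m : Measurable g1 := by
    apply Measurable.mul
    · apply Measurable.div _ (hpitm.comp meas_proj)
      exact Measurable.ite (measurableSet_trt true) measurable_const measurable_const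
    · exact meas_y.sub (hm1m.comp meas_proj)
  have hg1int : Integrable g1 P := by
    refine integrable_of_aebdd hg1m.aestronglyMeasurable (M := (1/eps) * (C + C)) ?_
    filter_upwards [hY] with z hz
    rw [hg1, abs_mul]
    refine mul_le_mul ?_ ?_ (abs_nonneg _) (by positivity)
    · rcases Bool.dichotomy z.2.2 with h | h
      · have he : (if z.2.2 then (1:ℝ) else 0) = 0 := by simp [h]
        rw [he, zero_div, abs_zero]; positivity
      · have he : (if z.2.2 then (1:ℝ) else 0) = 1 := by simp [h]
        rw [he]; exact hdivb z.2.1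
    · calc |z.1 - m1 z.2.1| ≤ |z.1| + |m1 z.2.1| := abs_sub _ _
        _ ≤ C + C := add_le_add hz (hm1b z.2.1)
  have hsplit := integral_add_compl (measurableSet_trt (X := X) true) hg1int
  have hzero : ∫ z in {z : Obs X | z.2.2 = true}ᶜ, g1 z ∂P = 0 := by
    have heq : EqOn g1 0 {z : Obs X | z.2.2 = true}ᶜ := by
      intro z hz
      have : z.2.2 = false := by
        simp only [mem_compl_iff, mem_setOf_eq] at hz
        exact Bool.not_eq_true _ ▸ (by simpa using hz)
      simp [hg1, this]
    rw [setIntegral_congr_fun (measurableSet_trt true).compl heq]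
    simp
  have hS : ∫ z in {z : Obs X | z.2.2 = true}, g1 z ∂P
      = ∫ z in {z : Obs X | z.2.2 = true}, ((1 / pit z.2.1) * z.1 - (1 / pit z.2.1) * m1 z.2.1) ∂P := by
    refine setIntegral_congr_fun (measurableSet_trt true) ?_
    intro z hz
    have : z.2.2 = true := hz
    simp only [hg1, this, if_true]
    ring
  have hint1 : Integrable (fun z : Obs X => (1 / pit z.2.1) * z.1)
      (P.restrict {z : Obs X | z.2.2 = true}) := by
    refine integrable_of_aebdd ((measurable_const.div (hpitm.comp meas_proj)).mul
      meas_y).aestronglyMeasurable (M := (1/eps) * C) ?_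
    filter_upwards [ae_restrict_of_ae hY] with z hz
    rw [abs_mul]
    exact mul_le_mul (hdivb z.2.1) hz (abs_nonneg _) (by positivity)
  have hint2 : Integrable (fun z : Obs X => (1 / pit z.2.1) * m1 z.2.1)
      (P.restrict {z : Obs X | z.2.2 = true}) := by
    refine integrable_of_aebdd ((measurable_const.div (hpitm.comp meas_proj)).mul
      (hm1m.comp meas_proj)).aestronglyMeasurable (M := (1/eps) * C)
      (Eventually.of_forall fun z => ?_)
    rw [abs_mul]
    exact mul_le_mul (hdivb z.2.1) (hm1b z.2.1) (abs_nonneg _) (by positivity)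
  calc ∫ z, g1 z ∂P
      = ∫ z in {z : Obs X | z.2.2 = true}, g1 z ∂P := by rw [← hsplit, hzero, add_zero]
    _ = ∫ z in {z : Obs X | z.2.2 = true}, ((1 / pit z.2.1) * z.1 - (1 / pit z.2.1) * m1 z.2.1) ∂P := hS
    _ = (∫ z in {z : Obs X | z.2.2 = true}, (1 / pit z.2.1) * z.1 ∂P)
        - ∫ z in {z : Obs X | z.2.2 = true}, (1 / pit z.2.1) * m1 z.2.1 ∂P :=
      integral_sub hint1 hint2

/-- Reduce the second AIPW term to set integrals over the control arm. -/
lemma integral_g2 (heps : 0 < eps)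
    (hpitm : Measurable pit) (hpitr : ∀ x, pit x ∈ Icc eps (1 - eps))
    (hm1m : Measurable m1) (hm1b : ∀ x, |m1 x| ≤ C)
    (hY : ∀ᵐ z ∂P, |z.1| ≤ C) :
    ∫ z, (1 - if z.2.2 then (1:ℝ) else 0) / (1 - pit z.2.1) * (z.1 - m1 z.2.1) ∂P
      = (∫ z in {z : Obs X | z.2.2 = false}, (1 / (1 - pit z.2.1)) * z.1 ∂P)
        - ∫ z in {z : Obs X | z.2.2 = false}, (1 / (1 - pit z.2.1)) * m1 z.2.1 ∂P := by
  have hpitpos : ∀ x, 0 < 1 - pit x := fun x => by linarith [(hpitr x).2]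
  have hdivb : ∀ x, |1 / (1 - pit x)| ≤ 1 / eps := by
    intro x
    rw [abs_of_pos (one_div_pos.mpr (hpitpos x))]
    exact one_div_le_one_div_of_le heps (by linarith [(hpitr x).2])
  set g2 : Obs X → ℝ :=
    fun z => (1 - if z.2.2 then (1:ℝ) else 0) / (1 - pit z.2.1) * (z.1 - m1 z.2.1) with hg2
  have hg2m : Measurable g2 := by
    apply Measurable.mul
    · apply Measurable.div _ (measurable_const.sub (hpitm.comp meas_proj))
      exact measurable_const.sub
        (Measurable.ite (measurableSet_trt true) measurable_const measurable_const)
    · exact meas_y.sub (hm1m.comp meas_proj)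
  have hg2int : Integrable g2 P := by
    refine integrable_of_aebdd hg2m.aestronglyMeasurable (M := (1/eps) * (C + C)) ?_
    filter_upwards [hY] with z hz
    rw [hg2, abs_mul]
    refine mul_le_mul ?_ ?_ (abs_nonneg _) (by positivity)
    · rcases Bool.dichotomy z.2.2 with h | h
      · have he : (1 - if z.2.2 then (1:ℝ) else 0) = 1 := by simp [h]
        rw [he]; exact hdivb z.2.1
      · have he : (1 - if z.2.2 then (1:ℝ) else 0) = 0 := by simp [h]
        rw [he, zero_div, abs_zero]; positivity
    · calc |z.1 - m1 z.2.1| ≤ |z.1| + |m1 z.2.1| := abs_sub _ _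
        _ ≤ C + C := add_le_add hz (hm1b z.2.1)
  have hcompl : {z : Obs X | z.2.2 = false}ᶜ = {z : Obs X | z.2.2 = true} := by
    ext z; simp
  have hsplit := integral_add_compl (measurableSet_trt (X := X) false) hg2int
  have hzero : ∫ z in {z : Obs X | z.2.2 = false}ᶜ, g2 z ∂P = 0 := by
    have heq : EqOn g2 0 {z : Obs X | z.2.2 = false}ᶜ := by
      intro z hz
      rw [hcompl] at hz
      have : z.2.2 = true := hz
      simp [hg2, this]
    rw [setIntegral_congr_fun (measurableSet_trt false).compl heq]
    simp
  have hS : ∫ z in {z : Obs X | z.2.2 = false}, g2 z ∂P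
      = ∫ z in {z : Obs X | z.2.2 = false},
          ((1 / (1 - pit z.2.1)) * z.1 - (1 / (1 - pit z.2.1)) * m1 z.2.1) ∂P := by
    refine setIntegral_congr_fun (measurableSet_trt false) ?_
    intro z hz
    have : z.2.2 = false := hz
    simp only [hg2, this, if_false, Bool.false_eq_true]
    ring
  have hint1 : Integrable (fun z : Obs X => (1 / (1 - pit z.2.1)) * z.1)
      (P.restrict {z : Obs X | z.2.2 = false}) := by
    refine integrable_of_aebdd ((measurable_const.div
      (measurable_const.sub (hpitm.comp meas_proj))).mul meas_y).aestronglyMeasurable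
      (M := (1/eps) * C) ?_
    filter_upwards [ae_restrict_of_ae hY] with z hz
    rw [abs_mul]
    exact mul_le_mul (hdivb z.2.1) hz (abs_nonneg _) (by positivity)
  have hint2 : Integrable (fun z : Obs X => (1 / (1 - pit z.2.1)) * m1 z.2.1)
      (P.restrict {z : Obs X | z.2.2 = false}) := by
    refine integrable_of_aebdd ((measurable_const.div
      (measurable_const.sub (hpitm.comp meas_proj))).mul
      (hm1m.comp meas_proj)).aestronglyMeasurable (M := (1/eps) * C)
      (Eventually.of_forall fun z => ?_)
    rw [abs_mul]
    exact mul_le_mul (hdivb z.2.1) (hm1b z.2.1) (abs_nonneg _) (by positivity)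
  calc ∫ z, g2 z ∂P
      = ∫ z in {z : Obs X | z.2.2 = false}, g2 z ∂P := by rw [← hsplit, hzero, add_zero]
    _ = ∫ z in {z : Obs X | z.2.2 = false},
          ((1 / (1 - pit z.2.1)) * z.1 - (1 / (1 - pit z.2.1)) * m1 z.2.1) ∂P := hS
    _ = _ := integral_sub hint1 hint2

lemma integrable_g1 (heps : 0 < eps)
    (hpitm : Measurable pit) (hpitr : ∀ x, pit x ∈ Icc eps (1 - eps))
    (hm1m : Measurable m1) (hm1b : ∀ x, |m1 x| ≤ C)
    (hY : ∀ᵐ z ∂P, |z.1| ≤ C) :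
    Integrable (fun z : Obs X =>
      (if z.2.2 then (1:ℝ) else 0) / pit z.2.1 * (z.1 - m1 z.2.1)) P := by
  have hpitpos : ∀ x, 0 < pit x := fun x => lt_of_lt_of_le heps (hpitr x).1
  have hdivb : ∀ x, |1 / pit x| ≤ 1 / eps := by
    intro x
    rw [abs_of_pos (one_div_pos.mpr (hpitpos x))]
    exact one_div_le_one_div_of_le heps (hpitr x).1
  have hm : Measurable (fun z : Obs X =>
      (if z.2.2 then (1:ℝ) else 0) / pit z.2.1 * (z.1 - m1 z.2.1)) := by
    apply Measurable.mul
    · apply Measurable.div _ (hpitm.comp meas_proj)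
      exact Measurable.ite (measurableSet_trt true) measurable_const measurable_const
    · exact meas_y.sub (hm1m.comp meas_proj)
  refine integrable_of_aebdd hm.aestronglyMeasurable (M := (1/eps) * (C + C)) ?_
  filter_upwards [hY] with z hz
  rw [abs_mul]
  refine mul_le_mul ?_ ?_ (abs_nonneg _) (by positivity)
  · rcases Bool.dichotomy z.2.2 with h | h
    · have he : (if z.2.2 then (1:ℝ) else 0) = 0 := by simp [h]
      rw [he, zero_div, abs_zero]; positivity
    · have he : (if z.2.2 then (1:ℝ) else 0) = 1 := by simp [h]
      rw [he]; exact hdivb z.2.1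
  · calc |z.1 - m1 z.2.1| ≤ |z.1| + |m1 z.2.1| := abs_sub _ _
      _ ≤ C + C := add_le_add hz (hm1b z.2.1)

lemma integrable_g2 (heps : 0 < eps)
    (hpitm : Measurable pit) (hpitr : ∀ x, pit x ∈ Icc eps (1 - eps))
    (hm1m : Measurable m1) (hm1b : ∀ x, |m1 x| ≤ C)
    (hY : ∀ᵐ z ∂P, |z.1| ≤ C) :
    Integrable (fun z : Obs X =>
      (1 - if z.2.2 then (1:ℝ) else 0) / (1 - pit z.2.1) * (z.1 - m1 z.2.1)) P := by
  have hpitpos : ∀ x, 0 < 1 - pit x := fun x => by linarith [(hpitr x).2]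
  have hdivb : ∀ x, |1 / (1 - pit x)| ≤ 1 / eps := by
    intro x
    rw [abs_of_pos (one_div_pos.mpr (hpitpos x))]
    exact one_div_le_one_div_of_le heps (by linarith [(hpitr x).2])
  have hm : Measurable (fun z : Obs X =>
      (1 - if z.2.2 then (1:ℝ) else 0) / (1 - pit z.2.1) * (z.1 - m1 z.2.1)) := by
    apply Measurable.mul
    · apply Measurable.div _ (measurable_const.sub (hpitm.comp meas_proj))
      exact measurable_const.sub
        (Measurable.ite (measurableSet_trt true) measurable_const measurable_const)
    · exact meas_y.sub (hm1m.comp meas_proj)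
  refine integrable_of_aebdd hm.aestronglyMeasurable (M := (1/eps) * (C + C)) ?_
  filter_upwards [hY] with z hz
  rw [abs_mul]
  refine mul_le_mul ?_ ?_ (abs_nonneg _) (by positivity)
  · rcases Bool.dichotomy z.2.2 with h | h
    · have he : (1 - if z.2.2 then (1:ℝ) else 0) = 1 := by simp [h]
      rw [he]; exact hdivb z.2.1
    · have he : (1 - if z.2.2 then (1:ℝ) else 0) = 0 := by simp [h]
      rw [he, zero_div, abs_zero]; positivity
  · calc |z.1 - m1 z.2.1| ≤ |z.1| + |m1 z.2.1| := abs_sub _ _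
      _ ≤ C + C := add_le_add hz (hm1b z.2.1)

lemma integrable_mu {m : X → ℝ} (hmm : Measurable m) (hmb : ∀ x, |m x| ≤ C) :
    Integrable (fun z : Obs X => m z.2.1) P :=
  integrable_of_aebdd ((hmm.comp meas_proj).aestronglyMeasurable)
    (Eventually.of_forall fun z => hmb z.2.1)

/-- Under the measure owning the conditional means, the AIPW integral reduces to the ATE. -/
lemma integral_phi_own (heps : 0 < eps)
    (hpitm : Measurable pit) (hpitr : ∀ x, pit x ∈ Icc eps (1 - eps))
    {m : Bool → X → ℝ} (hmm : ∀ a, Measurable (m a)) (hmb : ∀ a x, |m a x| ≤ C)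
    (hY : ∀ᵐ z ∂P, |z.1| ≤ C)
    (hident : ∀ (a : Bool) (B : Set X), MeasurableSet B →
      ∫ z in {z : Obs X | z.2.1 ∈ B ∧ z.2.2 = a}, z.1 ∂P
        = ∫ z in {z : Obs X | z.2.1 ∈ B ∧ z.2.2 = a}, m a z.2.1 ∂P) :
    ∫ z, ((if z.2.2 then (1:ℝ) else 0) / pit z.2.1 * (z.1 - m true z.2.1)
      - (1 - if z.2.2 then (1:ℝ) else 0) / (1 - pit z.2.1) * (z.1 - m false z.2.1)
      + (m true z.2.1 - m false z.2.1)) ∂P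
    = ∫ z, (m true z.2.1 - m false z.2.1) ∂P := by
  have hpitpos : ∀ x, 0 < pit x := fun x => lt_of_lt_of_le heps (hpitr x).1
  have hpitpos' : ∀ x, 0 < 1 - pit x := fun x => by linarith [(hpitr x).2]
  have hdivb : ∀ x, |(fun x => 1 / pit x) x| ≤ 1 / eps := by
    intro x
    rw [abs_of_pos (one_div_pos.mpr (hpitpos x))]
    exact one_div_le_one_div_of_le heps (hpitr x).1
  have hdivb' : ∀ x, |(fun x => 1 / (1 - pit x)) x| ≤ 1 / eps := by
    intro x
    rw [abs_of_pos (one_div_pos.mpr (hpitpos' x))]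
    exact one_div_le_one_div_of_le heps (by linarith [(hpitr x).2])
  have hg1int := integrable_g1 (m1 := m true) heps hpitm hpitr (hmm true) (hmb true) hY
  have hg2int := integrable_g2 (m1 := m false) heps hpitm hpitr (hmm false) (hmb false) hY
  have hg3int : Integrable (fun z : Obs X => m true z.2.1 - m false z.2.1) P :=
    (integrable_mu (hmm true) (hmb true)).sub (integrable_mu (hmm false) (hmb false))
  have hg12int : Integrable (fun z : Obs X =>
      (if z.2.2 then (1:ℝ) else 0) / pit z.2.1 * (z.1 - m true z.2.1)
      - (1 - if z.2.2 then (1:ℝ) else 0) / (1 - pit z.2.1) * (z.1 - m false z.2.1)) P :=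
    hg1int.sub hg2int
  rw [integral_add hg12int hg3int, integral_sub hg1int hg2int]
  rw [integral_g1 heps hpitm hpitr (hmm true) (hmb true) hY,
    integral_g2 heps hpitm hpitr (hmm false) (hmb false) hY]
  have h1 := condmean_ext (P := P) (a := true) (hmm true) (hmb true) hY (hident true)
    (fun x => 1 / pit x) (measurable_const.div hpitm) (1/eps) hdivb
  have h2 := condmean_ext (P := P) (a := false) (hmm false) (hmb false) hY (hident false)
    (fun x => 1 / (1 - pit x)) (measurable_const.div (measurable_const.sub hpitm))
    (1/eps) hdivb'
  rw [h1, h2]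
  ring

/-- Under the other measure, the AIPW integral reduces to that measure's ATE,
provided `pit` is (a version of) its propensity. -/
lemma integral_phi_other (heps : 0 < eps)
    (hpitm : Measurable pit) (hpitr : ∀ x, pit x ∈ Icc eps (1 - eps))
    (hpident : ∀ B : Set X, MeasurableSet B →
      (P {z : Obs X | z.2.1 ∈ B ∧ z.2.2 = true}).toReal
        = ∫ z in {z : Obs X | z.2.1 ∈ B}, pit z.2.1 ∂P)
    {m mh : Bool → X → ℝ}
    (hmm : ∀ a, Measurable (m a)) (hmb : ∀ a x, |m a x| ≤ C)
    (hmhm : ∀ a, Measurable (mh a)) (hmhb : ∀ a x, |mh a x| ≤ C)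
    (hY : ∀ᵐ z ∂P, |z.1| ≤ C)
    (hident : ∀ (a : Bool) (B : Set X), MeasurableSet B →
      ∫ z in {z : Obs X | z.2.1 ∈ B ∧ z.2.2 = a}, z.1 ∂P
        = ∫ z in {z : Obs X | z.2.1 ∈ B ∧ z.2.2 = a}, mh a z.2.1 ∂P) :
    ∫ z, ((if z.2.2 then (1:ℝ) else 0) / pit z.2.1 * (z.1 - m true z.2.1)
      - (1 - if z.2.2 then (1:ℝ) else 0) / (1 - pit z.2.1) * (z.1 - m false z.2.1)
      + (m true z.2.1 - m false z.2.1)) ∂P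
    = ∫ z, (mh true z.2.1 - mh false z.2.1) ∂P := by
  have hpitpos : ∀ x, 0 < pit x := fun x => lt_of_lt_of_le heps (hpitr x).1
  have hpitpos' : ∀ x, 0 < 1 - pit x := fun x => by linarith [(hpitr x).2]
  have hdivb : ∀ x, |(fun x => 1 / pit x) x| ≤ 1 / eps := by
    intro x
    rw [abs_of_pos (one_div_pos.mpr (hpitpos x))]
    exact one_div_le_one_div_of_le heps (hpitr x).1
  have hdivb' : ∀ x, |(fun x => 1 / (1 - pit x)) x| ≤ 1 / eps := by
    intro x
    rw [abs_of_pos (one_div_pos.mpr (hpitpos' x))]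
    exact one_div_le_one_div_of_le heps (by linarith [(hpitr x).2])
  have hg1int := integrable_g1 (m1 := m true) heps hpitm hpitr (hmm true) (hmb true) hY
  have hg2int := integrable_g2 (m1 := m false) heps hpitm hpitr (hmm false) (hmb false) hY
  have hg3int : Integrable (fun z : Obs X => m true z.2.1 - m false z.2.1) P :=
    (integrable_mu (hmm true) (hmb true)).sub (integrable_mu (hmm false) (hmb false))
  have hg12int : Integrable (fun z : Obs X =>
      (if z.2.2 then (1:ℝ) else 0) / pit z.2.1 * (z.1 - m true z.2.1)
      - (1 - if z.2.2 then (1:ℝ) else 0) / (1 - pit z.2.1) * (z.1 - m false z.2.1)) P :=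
    hg1int.sub hg2int
  rw [integral_add hg12int hg3int, integral_sub hg1int hg2int]
  rw [integral_g1 heps hpitm hpitr (hmm true) (hmb true) hY,
    integral_g2 heps hpitm hpitr (hmm false) (hmb false) hY]
  -- replace y by mh on each arm
  have h1 := condmean_ext (P := P) (a := true) (hmhm true) (hmhb true) hY (hident true)
    (fun x => 1 / pit x) (measurable_const.div hpitm) (1/eps) hdivb
  have h2 := condmean_ext (P := P) (a := false) (hmhm false) (hmhb false) hY (hident false)
    (fun x => 1 / (1 - pit x)) (measurable_const.div (measurable_const.sub hpitm))
    (1/eps) hdivb'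
  rw [h1, h2]
  -- combine differences on each arm
  have hintT1 : Integrable (fun z : Obs X => (1 / pit z.2.1) * mh true z.2.1)
      (P.restrict {z : Obs X | z.2.2 = true}) := by
    refine integrable_of_aebdd ((measurable_const.div (hpitm.comp meas_proj)).mul
      ((hmhm true).comp meas_proj)).aestronglyMeasurable (M := (1/eps) * C)
      (Eventually.of_forall fun z => ?_)
    rw [abs_mul]
    exact mul_le_mul (hdivb z.2.1) (hmhb true z.2.1) (abs_nonneg _) (by positivity)
  have hintT2 : Integrable (fun z : Obs X => (1 / pit z.2.1) * m true z.2.1)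
      (P.restrict {z : Obs X | z.2.2 = true}) := by
    refine integrable_of_aebdd ((measurable_const.div (hpitm.comp meas_proj)).mul
      ((hmm true).comp meas_proj)).aestronglyMeasurable (M := (1/eps) * C)
      (Eventually.of_forall fun z => ?_)
    rw [abs_mul]
    exact mul_le_mul (hdivb z.2.1) (hmb true z.2.1) (abs_nonneg _) (by positivity)
  have hintF1 : Integrable (fun z : Obs X => (1 / (1 - pit z.2.1)) * mh false z.2.1)
      (P.restrict {z : Obs X | z.2.2 = false}) := by
    refine integrable_of_aebdd ((measurable_const.div
      (measurable_const.sub (hpitm.comp meas_proj))).mul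
      ((hmhm false).comp meas_proj)).aestronglyMeasurable (M := (1/eps) * C)
      (Eventually.of_forall fun z => ?_)
    rw [abs_mul]
    exact mul_le_mul (hdivb' z.2.1) (hmhb false z.2.1) (abs_nonneg _) (by positivity)
  have hintF2 : Integrable (fun z : Obs X => (1 / (1 - pit z.2.1)) * m false z.2.1)
      (P.restrict {z : Obs X | z.2.2 = false}) := by
    refine integrable_of_aebdd ((measurable_const.div
      (measurable_const.sub (hpitm.comp meas_proj))).mul
      ((hmm false).comp meas_proj)).aestronglyMeasurable (M := (1/eps) * C)
      (Eventually.of_forall fun z => ?_)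
    rw [abs_mul]
    exact mul_le_mul (hdivb' z.2.1) (hmb false z.2.1) (abs_nonneg _) (by positivity)
  have hcombT : (∫ z in {z : Obs X | z.2.2 = true}, (1 / pit z.2.1) * mh true z.2.1 ∂P)
      - ∫ z in {z : Obs X | z.2.2 = true}, (1 / pit z.2.1) * m true z.2.1 ∂P
      = ∫ z in {z : Obs X | z.2.2 = true},
          (fun x => 1 / pit x * (mh true x - m true x)) z.2.1 ∂P := by
    rw [← integral_sub hintT1 hintT2]
    refine integral_congr_ae (Eventually.of_forall fun z => ?_)
    simp only
    ring
  have hcombF : (∫ z in {z : Obs X | z.2.2 = false}, (1 / (1 - pit z.2.1)) * mh false z.2.1 ∂P)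
      - ∫ z in {z : Obs X | z.2.2 = false}, (1 / (1 - pit z.2.1)) * m false z.2.1 ∂P
      = ∫ z in {z : Obs X | z.2.2 = false},
          (fun x => 1 / (1 - pit x) * (mh false x - m false x)) z.2.1 ∂P := by
    rw [← integral_sub hintF1 hintF2]
    refine integral_congr_ae (Eventually.of_forall fun z => ?_)
    simp only
    ring
  -- propensity extension
  have hpT := propensity_ext heps hpitm hpitr hpident
    (fun x => 1 / pit x * (mh true x - m true x))
    ((measurable_const.div hpitm).mul ((hmhm true).sub (hmm true)))
  have hpF := propensity_ext_false heps hpitm hpitr hpident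
    (fun x => 1 / (1 - pit x) * (mh false x - m false x))
    ((measurable_const.div (measurable_const.sub hpitm)).mul ((hmhm false).sub (hmm false)))
    ((1/eps) * (C + C))
    (fun x => by
      rw [abs_mul]
      refine mul_le_mul (hdivb' x) ?_ (abs_nonneg _) (by positivity)
      calc |mh false x - m false x| ≤ |mh false x| + |m false x| := abs_sub _ _
        _ ≤ C + C := add_le_add (hmhb false x) (hmb false x))
  have hsimpT : ∫ z, pit z.2.1 * (1 / pit z.2.1 * (mh true z.2.1 - m true z.2.1)) ∂P
      = ∫ z, (mh true z.2.1 - m true z.2.1) ∂P := by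
    refine integral_congr_ae (Eventually.of_forall fun z => ?_)
    have h0 : pit z.2.1 ≠ 0 := ne_of_gt (hpitpos z.2.1)
    beta_reduce
    rw [← mul_assoc, mul_one_div_cancel h0, one_mul]
  have hsimpF : ∫ z, (1 - pit z.2.1) * (1 / (1 - pit z.2.1) * (mh false z.2.1 - m false z.2.1)) ∂P
      = ∫ z, (mh false z.2.1 - m false z.2.1) ∂P := by
    refine integral_congr_ae (Eventually.of_forall fun z => ?_)
    have h0 : (1 - pit z.2.1) ≠ 0 := ne_of_gt (hpitpos' z.2.1)
    beta_reduce
    rw [← mul_assoc, mul_one_div_cancel h0, one_mul]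
  rw [hcombT, hcombF, hpT, hpF, hsimpT, hsimpF]
  -- final algebra
  have iT : Integrable (fun z : Obs X => mh true z.2.1 - m true z.2.1) P :=
    (integrable_mu (hmhm true) (hmhb true)).sub (integrable_mu (hmm true) (hmb true))
  have iF : Integrable (fun z : Obs X => mh false z.2.1 - m false z.2.1) P :=
    (integrable_mu (hmhm false) (hmhb false)).sub (integrable_mu (hmm false) (hmb false))
  rw [integral_sub (integrable_mu (hmhm true) (hmhb true)) (integrable_mu (hmm true) (hmb true)),
    integral_sub (integrable_mu (hmhm false) (hmhb false)) (integrable_mu (hmm false) (hmb false)),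
    integral_sub (integrable_mu (hmm true) (hmb true)) (integrable_mu (hmm false) (hmb false)),
    integral_sub (integrable_mu (hmhm true) (hmhb true)) (integrable_mu (hmhm false) (hmhb false))]
  ring

/-- Pointwise bound on the AIPW function. -/
lemma phi_abs_bound (heps : 0 < eps)
    (hpitr : ∀ x, pit x ∈ Icc eps (1 - eps))
    {m : Bool → X → ℝ} (hmb : ∀ a x, |m a x| ≤ C) {z : Obs X} (hz : |z.1| ≤ C) :
    |(if z.2.2 then (1:ℝ) else 0) / pit z.2.1 * (z.1 - m true z.2.1)
      - (1 - if z.2.2 then (1:ℝ) else 0) / (1 - pit z.2.1) * (z.1 - m false z.2.1)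
      + (m true z.2.1 - m false z.2.1)| ≤ (1/eps) * (C + C) + (C + C) := by
  have h1 := hpitr z.2.1
  have hp : 0 < pit z.2.1 := lt_of_lt_of_le heps h1.1
  have hp' : 0 < 1 - pit z.2.1 := by linarith [h1.2]
  have h3 : |m true z.2.1 - m false z.2.1| ≤ C + C :=
    le_trans (abs_sub _ _) (add_le_add (hmb true _) (hmb false _))
  rcases Bool.dichotomy z.2.2 with h | h
  · have he : (if z.2.2 then (1:ℝ) else 0) = 0 := by simp [h]
    rw [he, zero_div, zero_mul, zero_sub, sub_zero]
    refine le_trans (abs_add_le _ _) ?_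
    rw [abs_neg]
    refine add_le_add ?_ h3
    rw [abs_mul]
    refine mul_le_mul ?_ ?_ (abs_nonneg _) (by positivity)
    · rw [abs_of_pos (one_div_pos.mpr hp')]
      exact one_div_le_one_div_of_le heps (by linarith [h1.2])
    · exact le_trans (abs_sub _ _) (add_le_add hz (hmb false _))
  · have he : (if z.2.2 then (1:ℝ) else 0) = 1 := by simp [h]
    rw [he, sub_self, zero_div, zero_mul, sub_zero]
    refine le_trans (abs_add_le _ _) ?_
    refine add_le_add ?_ h3
    rw [abs_mul]
    refine mul_le_mul ?_ ?_ (abs_nonneg _) (by positivity)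
    · rw [abs_of_pos (one_div_pos.mpr hp)]
      exact one_div_le_one_div_of_le heps h1.1
    · exact le_trans (abs_sub _ _) (add_le_add hz (hmb true _))

end Phi

theorem ate_hellinger_lipschitz
    (ν : Measure (Obs X)) [SigmaFinite ν]
    (CY eps : ℝ) (heps : 0 < eps)
    (P1 P2 : Measure (Obs X)) [IsProbabilityMeasure P1] [IsProbabilityMeasure P2]
    (p1 p2 : Obs X → ℝ)
    (hp1_meas : Measurable p1) (hp2_meas : Measurable p2)
    (hp1_nonneg : ∀ᵐ z ∂ν, 0 ≤ p1 z) (hp2_nonneg : ∀ᵐ z ∂ν, 0 ≤ p2 z)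
    (hp1 : IsDensityOf ν P1 p1) (hp2 : IsDensityOf ν P2 p2)
    (hY1 : ∀ᵐ z ∂P1, |z.1| ≤ CY) (hY2 : ∀ᵐ z ∂P2, |z.1| ≤ CY)
    (μ1f μ2f : Bool → X → ℝ)
    (hμ1 : ∀ a, IsCondMean P1 a (μ1f a)) (hμ2 : ∀ a, IsCondMean P2 a (μ2f a))
    (pi1 pi2 : X → ℝ)
    (hpi1 : IsPropensity P1 pi1) (hpi2 : IsPropensity P2 pi2)
    (hpi1_range : ∀ᵐ z ∂P1, pi1 z.2.1 ∈ Set.Icc eps (1 - eps))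
    (hpi2_range : ∀ᵐ z ∂P2, pi2 z.2.1 ∈ Set.Icc eps (1 - eps)) :
    |(∫ z, (μ1f true z.2.1 - μ1f false z.2.1) ∂P1)
        - (∫ z, (μ2f true z.2.1 - μ2f false z.2.1) ∂P2)|
      ≤ 4 * Real.sqrt 2 * CY * (1 + 1 / eps) * hellingerDist ν p1 p2 := by
  classical
  have hP1d : P1 = ν.withDensity (fun z => ENNReal.ofReal (p1 z)) := hp1
  have hP2d : P2 = ν.withDensity (fun z => ENNReal.ofReal (p2 z)) := hp2
  haveI hb1ne : (ae P1).NeBot := ae_neBot.mpr (IsProbabilityMeasure.ne_zero P1)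
  haveI hb2ne : (ae P2).NeBot := ae_neBot.mpr (IsProbabilityMeasure.ne_zero P2)
  obtain ⟨z0, hz0⟩ := hY1.exists
  have hC : 0 ≤ CY := le_trans (abs_nonneg _) hz0
  obtain ⟨z1, hz1⟩ := hpi2_range.exists
  have heps2 : eps ≤ 1 - eps := le_trans hz1.1 hz1.2
  set m1c : Bool → X → ℝ := fun a x => max (-CY) (min CY (μ1f a x)) with hm1cdef
  set m2c : Bool → X → ℝ := fun a x => max (-CY) (min CY (μ2f a x)) with hm2cdef
  set pitc : X → ℝ := fun x => max eps (min (1 - eps) (pi2 x)) with hpitcdef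
  have hm1cm : ∀ a, Measurable (m1c a) := fun a =>
    measurable_const.max (measurable_const.min (hμ1 a).1)
  have hm2cm : ∀ a, Measurable (m2c a) := fun a =>
    measurable_const.max (measurable_const.min (hμ2 a).1)
  have hpitcm : Measurable pitc := measurable_const.max (measurable_const.min hpi2.1)
  have hm1cb : ∀ a x, |m1c a x| ≤ CY := fun a x => clamp_abs_le hC _
  have hm2cb : ∀ a x, |m2c a x| ≤ CY := fun a x => clamp_abs_le hC _
  have hpitcr : ∀ x, pitc x ∈ Set.Icc eps (1 - eps) := fun x => clamp_mem_Icc heps2 _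
  have hae1 : ∀ a, ∀ᵐ z ∂P1, m1c a z.2.1 = μ1f a z.2.1 := fun a =>
    clamp_mu_ae_eq heps hpi1.1 hpi1.2 hpi1_range heps2 (hμ1 a).1 (hμ1 a).2.1 hY1 (hμ1 a).2.2
  have hae2 : ∀ a, ∀ᵐ z ∂P2, m2c a z.2.1 = μ2f a z.2.1 := fun a =>
    clamp_mu_ae_eq heps hpi2.1 hpi2.2 hpi2_range heps2 (hμ2 a).1 (hμ2 a).2.1 hY2 (hμ2 a).2.2
  have hid1 : ∀ (a : Bool) (B : Set X), MeasurableSet B →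
      ∫ z in {z : Obs X | z.2.1 ∈ B ∧ z.2.2 = a}, z.1 ∂P1
        = ∫ z in {z : Obs X | z.2.1 ∈ B ∧ z.2.2 = a}, m1c a z.2.1 ∂P1 := fun a =>
    clamp_mu_ident (hae1 a) (hμ1 a).2.2
  have hid2 : ∀ (a : Bool) (B : Set X), MeasurableSet B →
      ∫ z in {z : Obs X | z.2.1 ∈ B ∧ z.2.2 = a}, z.1 ∂P2
        = ∫ z in {z : Obs X | z.2.1 ∈ B ∧ z.2.2 = a}, m2c a z.2.1 ∂P2 := fun a =>
    clamp_mu_ident (hae2 a) (hμ2 a).2.2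
  have hpitcid : ∀ B : Set X, MeasurableSet B →
      (P2 {z : Obs X | z.2.1 ∈ B ∧ z.2.2 = true}).toReal
        = ∫ z in {z : Obs X | z.2.1 ∈ B}, pitc z.2.1 ∂P2 :=
    clamp_prop_ident heps hpi2.1 hpi2.2 hpi2_range
  set Phi : Obs X → ℝ := fun z =>
    (if z.2.2 then (1:ℝ) else 0) / pitc z.2.1 * (z.1 - m1c true z.2.1)
      - (1 - if z.2.2 then (1:ℝ) else 0) / (1 - pitc z.2.1) * (z.1 - m1c false z.2.1)
      + (m1c true z.2.1 - m1c false z.2.1) with hPhidef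
  have e1 : ∫ z, Phi z ∂P1 = ∫ z, (μ1f true z.2.1 - μ1f false z.2.1) ∂P1 := by
    have h := integral_phi_own (P := P1) heps hpitcm hpitcr hm1cm hm1cb hY1 hid1
    refine Eq.trans h (integral_congr_ae ?_)
    filter_upwards [hae1 true, hae1 false] with z ht hf
    rw [ht, hf]
  have e2 : ∫ z, Phi z ∂P2 = ∫ z, (μ2f true z.2.1 - μ2f false z.2.1) ∂P2 := by
    have h := integral_phi_other (P := P2) heps hpitcm hpitcr hpitcid hm1cm hm1cb
      hm2cm hm2cb hY2 hid2
    refine Eq.trans h (integral_congr_ae ?_)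
    filter_upwards [hae2 true, hae2 false] with z ht hf
    rw [ht, hf]
  have iPhi1 : Integrable Phi P1 :=
    ((integrable_g1 (P := P1) (m1 := m1c true) heps hpitcm hpitcr (hm1cm true)
        (hm1cb true) hY1).sub
      (integrable_g2 (P := P1) (m1 := m1c false) heps hpitcm hpitcr (hm1cm false)
        (hm1cb false) hY1)).add
      ((integrable_mu (hm1cm true) (hm1cb true)).sub (integrable_mu (hm1cm false) (hm1cb false)))
  have iPhi2 : Integrable Phi P2 :=
    ((integrable_g1 (P := P2) (m1 := m1c true) heps hpitcm hpitcr (hm1cm true)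
        (hm1cb true) hY2).sub
      (integrable_g2 (P := P2) (m1 := m1c false) heps hpitcm hpitcr (hm1cm false)
        (hm1cb false) hY2)).add
      ((integrable_mu (hm1cm true) (hm1cb true)).sub (integrable_mu (hm1cm false) (hm1cb false)))
  set M : ℝ := (1/eps) * (CY + CY) + (CY + CY) with hMdef
  have hMnn : 0 ≤ M := by rw [hMdef]; positivity
  have hbd1 : ∀ᵐ z ∂P1, |Phi z| ≤ M := by
    filter_upwards [hY1] with z hz
    exact phi_abs_bound heps hpitcr hm1cb hz
  have hbd2 : ∀ᵐ z ∂P2, |Phi z| ≤ M := by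
    filter_upwards [hY2] with z hz
    exact phi_abs_bound heps hpitcr hm1cb hz
  -- move to ν
  have conv1 : ∫ z, Phi z ∂P1 = ∫ z, p1 z * Phi z ∂ν := by
    rw [hP1d]
    have hdm : Measurable fun z : Obs X => (p1 z).toNNReal := hp1_meas.real_toNNReal
    have hfun : (fun z : Obs X => ENNReal.ofReal (p1 z))
        = fun z : Obs X => ((fun z : Obs X => (p1 z).toNNReal) z : ℝ≥0∞) := rfl
    rw [hfun, integral_withDensity_eq_integral_smul hdm]
    refine integral_congr_ae ?_
    filter_upwards [hp1_nonneg] with z hz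
    simp [NNReal.smul_def, Real.coe_toNNReal _ hz]
  have conv2 : ∫ z, Phi z ∂P2 = ∫ z, p2 z * Phi z ∂ν := by
    rw [hP2d]
    have hdm : Measurable fun z : Obs X => (p2 z).toNNReal := hp2_meas.real_toNNReal
    have hfun : (fun z : Obs X => ENNReal.ofReal (p2 z))
        = fun z : Obs X => ((fun z : Obs X => (p2 z).toNNReal) z : ℝ≥0∞) := rfl
    rw [hfun, integral_withDensity_eq_integral_smul hdm]
    refine integral_congr_ae ?_
    filter_upwards [hp2_nonneg] with z hz
    simp [NNReal.smul_def, Real.coe_toNNReal _ hz]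
  have ipPhi1 : Integrable (fun z => p1 z * Phi z) ν := by
    have hint := iPhi1
    rw [hP1d] at hint
    have h2 := (integrable_withDensity_iff hp1_meas.ennreal_ofReal
      (Eventually.of_forall fun z => ENNReal.ofReal_lt_top)).mp hint
    refine h2.congr ?_
    filter_upwards [hp1_nonneg] with z hz
    rw [ENNReal.toReal_ofReal hz, mul_comm]
  have ipPhi2 : Integrable (fun z => p2 z * Phi z) ν := by
    have hint := iPhi2
    rw [hP2d] at hint
    have h2 := (integrable_withDensity_iff hp2_meas.ennreal_ofReal
      (Eventually.of_forall fun z => ENNReal.ofReal_lt_top)).mp hint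
    refine h2.congr ?_
    filter_upwards [hp2_nonneg] with z hz
    rw [ENNReal.toReal_ofReal hz, mul_comm]
  have hbdν1 : ∀ᵐ z ∂ν, ENNReal.ofReal (p1 z) ≠ 0 → |Phi z| ≤ M := by
    have h := hbd1
    rw [hP1d] at h
    exact (ae_withDensity_iff hp1_meas.ennreal_ofReal).mp h
  have hbdν2 : ∀ᵐ z ∂ν, ENNReal.ofReal (p2 z) ≠ 0 → |Phi z| ≤ M := by
    have h := hbd2
    rw [hP2d] at h
    exact (ae_withDensity_iff hp2_meas.ennreal_ofReal).mp h
  -- square-root functions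
  set u : Obs X → ℝ := fun z => Real.sqrt (p1 z) - Real.sqrt (p2 z) with hudef
  set v : Obs X → ℝ := fun z => Real.sqrt (p1 z) + Real.sqrt (p2 z) with hvdef
  have hvnn : ∀ z, 0 ≤ v z := fun z => add_nonneg (Real.sqrt_nonneg _) (Real.sqrt_nonneg _)
  have hum : Measurable fun z => |u z| := (hp1_meas.sqrt.sub hp2_meas.sqrt).abs
  have hvm : Measurable v := hp1_meas.sqrt.add hp2_meas.sqrt
  have hlint1 : ∫⁻ z, ENNReal.ofReal (p1 z) ∂ν = 1 := by
    have h : (ν.withDensity (fun z => ENNReal.ofReal (p1 z))) univ = 1 := by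
      rw [← hP1d]; exact measure_univ
    rwa [withDensity_apply _ MeasurableSet.univ, setLIntegral_univ] at h
  have hlint2 : ∫⁻ z, ENNReal.ofReal (p2 z) ∂ν = 1 := by
    have h : (ν.withDensity (fun z => ENNReal.ofReal (p2 z))) univ = 1 := by
      rw [← hP2d]; exact measure_univ
    rwa [withDensity_apply _ MeasurableSet.univ, setLIntegral_univ] at h
  have ip1 : Integrable p1 ν := by
    refine ⟨hp1_meas.aestronglyMeasurable, ?_⟩
    have hcong : ∫⁻ z, (‖p1 z‖₊ : ℝ≥0∞) ∂ν = ∫⁻ z, ENNReal.ofReal (p1 z) ∂ν :=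
      lintegral_congr_ae (by
        filter_upwards [hp1_nonneg] with z hz
        exact Real.enorm_eq_ofReal hz)
    show (∫⁻ z, (‖p1 z‖₊ : ℝ≥0∞) ∂ν) < ⊤
    rw [hcong, hlint1]
    exact ENNReal.one_lt_top
  have ip2 : Integrable p2 ν := by
    refine ⟨hp2_meas.aestronglyMeasurable, ?_⟩
    have hcong : ∫⁻ z, (‖p2 z‖₊ : ℝ≥0∞) ∂ν = ∫⁻ z, ENNReal.ofReal (p2 z) ∂ν :=
      lintegral_congr_ae (by
        filter_upwards [hp2_nonneg] with z hz
        exact Real.enorm_eq_ofReal hz)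
    show (∫⁻ z, (‖p2 z‖₊ : ℝ≥0∞) ∂ν) < ⊤
    rw [hcong, hlint2]
    exact ENNReal.one_lt_top
  have hintp1_one : ∫ z, p1 z ∂ν = 1 := by
    have h := ofReal_integral_eq_lintegral_ofReal ip1 hp1_nonneg
    rw [hlint1, ← ENNReal.ofReal_one] at h
    exact (ENNReal.ofReal_eq_ofReal_iff (integral_nonneg_of_ae hp1_nonneg) zero_le_one).mp h
  have hintp2_one : ∫ z, p2 z ∂ν = 1 := by
    have h := ofReal_integral_eq_lintegral_ofReal ip2 hp2_nonneg
    rw [hlint2, ← ENNReal.ofReal_one] at h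
    exact (ENNReal.ofReal_eq_ofReal_iff (integral_nonneg_of_ae hp2_nonneg) zero_le_one).mp h
  have isqu : Integrable (fun z => |u z| ^ 2) ν := by
    refine Integrable.mono' ((ip1.const_mul 2).add (ip2.const_mul 2))
      (hum.pow_const 2).aestronglyMeasurable ?_
    filter_upwards [hp1_nonneg, hp2_nonneg] with z h1 h2
    rw [Real.norm_eq_abs, abs_of_nonneg (by positivity), sq_abs]
    simp only [hudef, Pi.add_apply]
    nlinarith [Real.sq_sqrt h1, Real.sq_sqrt h2,
      sq_nonneg (Real.sqrt (p1 z) + Real.sqrt (p2 z))]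
  have isqv : Integrable (fun z => v z ^ 2) ν := by
    refine Integrable.mono' ((ip1.const_mul 2).add (ip2.const_mul 2))
      (hvm.pow_const 2).aestronglyMeasurable ?_
    filter_upwards [hp1_nonneg, hp2_nonneg] with z h1 h2
    rw [Real.norm_eq_abs, abs_of_nonneg (sq_nonneg _)]
    simp only [hvdef, Pi.add_apply]
    nlinarith [Real.sq_sqrt h1, Real.sq_sqrt h2,
      sq_nonneg (Real.sqrt (p1 z) - Real.sqrt (p2 z))]
  have hmemu : MemLp (fun z => |u z|) 2 ν :=
    (memLp_two_iff_integrable_sq hum.aestronglyMeasurable).mpr isqu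
  have hmemv : MemLp v 2 ν :=
    (memLp_two_iff_integrable_sq hvm.aestronglyMeasurable).mpr isqv
  have iuv : Integrable (fun z => |u z| * v z) ν := by
    refine Integrable.mono' (isqu.add isqv) (hum.mul hvm).aestronglyMeasurable
      (Eventually.of_forall fun z => ?_)
    rw [Real.norm_eq_abs, abs_of_nonneg (mul_nonneg (abs_nonneg _) (hvnn z))]
    simp only [Pi.add_apply]
    nlinarith [abs_nonneg (u z), hvnn z, sq_nonneg (|u z| - v z)]
  -- main difference identity
  have hsub : (∫ z, (μ1f true z.2.1 - μ1f false z.2.1) ∂P1)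
      - (∫ z, (μ2f true z.2.1 - μ2f false z.2.1) ∂P2)
      = ∫ z, (p1 z * Phi z - p2 z * Phi z) ∂ν := by
    rw [← e1, ← e2, conv1, conv2]
    exact (integral_sub ipPhi1 ipPhi2).symm
  have habs : |∫ z, (p1 z * Phi z - p2 z * Phi z) ∂ν|
      ≤ ∫ z, |p1 z * Phi z - p2 z * Phi z| ∂ν := by
    simpa [Real.norm_eq_abs] using
      norm_integral_le_integral_norm (μ := ν) (fun z => p1 z * Phi z - p2 z * Phi z)
  have iabs : Integrable (fun z => |p1 z * Phi z - p2 z * Phi z|) ν := by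
    have h : Integrable (fun z => p1 z * Phi z - p2 z * Phi z) ν := ipPhi1.sub ipPhi2
    exact h.abs
  have hmono : ∫ z, |p1 z * Phi z - p2 z * Phi z| ∂ν ≤ ∫ z, M * (|u z| * v z) ∂ν := by
    refine integral_mono_ae iabs (iuv.const_mul M) ?_
    filter_upwards [hp1_nonneg, hp2_nonneg, hbdν1, hbdν2] with z h1 h2 hq1 hq2
    by_cases hz12 : p1 z = 0 ∧ p2 z = 0
    · obtain ⟨ha, hb⟩ := hz12
      simp [hudef, hvdef, ha, hb]
    · have hΦ : |Phi z| ≤ M := by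
        rcases not_and_or.mp hz12 with hz1 | hz2
        · exact hq1 (fun hcon => hz1 (le_antisymm (ENNReal.ofReal_eq_zero.mp hcon) h1))
        · exact hq2 (fun hcon => hz2 (le_antisymm (ENNReal.ofReal_eq_zero.mp hcon) h2))
      have hfac : p1 z - p2 z = u z * v z := by
        have q1 := Real.sq_sqrt h1
        have q2 := Real.sq_sqrt h2
        rw [hudef, hvdef]
        beta_reduce
        linear_combination q2 - q1
      calc |p1 z * Phi z - p2 z * Phi z|
          = |p1 z - p2 z| * |Phi z| := by
            rw [show p1 z * Phi z - p2 z * Phi z = (p1 z - p2 z) * Phi z from by ring, abs_mul]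
        _ = (|u z| * v z) * |Phi z| := by rw [hfac, abs_mul, abs_of_nonneg (hvnn z)]
        _ ≤ (|u z| * v z) * M :=
            mul_le_mul_of_nonneg_left hΦ (mul_nonneg (abs_nonneg _) (hvnn z))
        _ = M * (|u z| * v z) := mul_comm _ _
  -- Hölder / Cauchy–Schwarz
  have hconj : Real.HolderConjugate 2 2 := Real.HolderConjugate.two_two
  have h2e : ENNReal.ofReal (2:ℝ) = 2 := by
    rw [show (2:ℝ) = ((2:ℕ):ℝ) by norm_num, ENNReal.ofReal_natCast]
    norm_num
  have hmemu' : MemLp (fun z => |u z|) (ENNReal.ofReal 2) ν := by rw [h2e]; exact hmemu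
  have hmemv' : MemLp v (ENNReal.ofReal 2) ν := by rw [h2e]; exact hmemv
  have hcs := integral_mul_le_Lp_mul_Lq_of_nonneg (μ := ν) hconj
    (Eventually.of_forall fun z => abs_nonneg (u z)) (Eventually.of_forall fun z => hvnn z)
    hmemu' hmemv'
  have hrpow_u : ∫ z, |u z| ^ (2:ℝ) ∂ν = ∫ z, u z ^ 2 ∂ν := by
    refine integral_congr_ae (Eventually.of_forall fun z => ?_)
    beta_reduce
    rw [show ((2:ℝ)) = ((2:ℕ):ℝ) by norm_num, Real.rpow_natCast, sq_abs]
  have hrpow_v : ∫ z, v z ^ (2:ℝ) ∂ν = ∫ z, v z ^ 2 ∂ν := by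
    refine integral_congr_ae (Eventually.of_forall fun z => ?_)
    beta_reduce
    rw [show ((2:ℝ)) = ((2:ℕ):ℝ) by norm_num, Real.rpow_natCast]
  set E : ℝ := ∫ z, (Real.sqrt (p1 z) - Real.sqrt (p2 z)) ^ 2 ∂ν with hEdef
  have hEu : ∫ z, u z ^ 2 ∂ν = E := rfl
  have hv4 : ∫ z, v z ^ 2 ∂ν ≤ 4 := by
    have hb : ∫ z, v z ^ 2 ∂ν ≤ ∫ z, (2 * p1 z + 2 * p2 z) ∂ν := by
      refine integral_mono_ae isqv ((ip1.const_mul 2).add (ip2.const_mul 2)) ?_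
      filter_upwards [hp1_nonneg, hp2_nonneg] with z h1 h2
      simp only [hvdef, Pi.add_apply]
      nlinarith [Real.sq_sqrt h1, Real.sq_sqrt h2,
        sq_nonneg (Real.sqrt (p1 z) - Real.sqrt (p2 z))]
    rw [integral_add (ip1.const_mul 2) (ip2.const_mul 2), integral_const_mul, integral_const_mul,
      hintp1_one, hintp2_one] at hb
    linarith
  have hsqrt_v : (∫ z, v z ^ (2:ℝ) ∂ν) ^ ((1:ℝ)/2) ≤ 2 := by
    rw [hrpow_v, ← Real.sqrt_eq_rpow]
    calc Real.sqrt (∫ z, v z ^ 2 ∂ν) ≤ Real.sqrt 4 := Real.sqrt_le_sqrt hv4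
      _ = 2 := by
        rw [show (4:ℝ) = 2^2 by norm_num, Real.sqrt_sq (by norm_num : (0:ℝ) ≤ 2)]
  have hsqrt_u : (∫ z, |u z| ^ (2:ℝ) ∂ν) ^ ((1:ℝ)/2) = Real.sqrt E := by
    rw [hrpow_u, Real.sqrt_eq_rpow]
  have hfinal : ∫ z, |u z| * v z ∂ν ≤ Real.sqrt E * 2 := by
    refine le_trans hcs ?_
    rw [hsqrt_u]
    exact mul_le_mul_of_nonneg_left hsqrt_v (Real.sqrt_nonneg _)
  have hH : hellingerDist ν p1 p2 = (1/Real.sqrt 2) * Real.sqrt E := rfl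
  calc |(∫ z, (μ1f true z.2.1 - μ1f false z.2.1) ∂P1)
        - (∫ z, (μ2f true z.2.1 - μ2f false z.2.1) ∂P2)|
      = |∫ z, (p1 z * Phi z - p2 z * Phi z) ∂ν| := by rw [hsub]
    _ ≤ ∫ z, |p1 z * Phi z - p2 z * Phi z| ∂ν := habs
    _ ≤ ∫ z, M * (|u z| * v z) ∂ν := hmono
    _ = M * ∫ z, |u z| * v z ∂ν := integral_const_mul M _
    _ ≤ M * (Real.sqrt E * 2) := mul_le_mul_of_nonneg_left hfinal hMnn
    _ ≤ 4 * Real.sqrt 2 * CY * (1 + 1 / eps) * hellingerDist ν p1 p2 := by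
        rw [hH]
        have hs2 : (0:ℝ) < Real.sqrt 2 := Real.sqrt_pos.mpr (by norm_num)
        have key : 4 * Real.sqrt 2 * CY * (1 + 1/eps) * ((1/Real.sqrt 2) * Real.sqrt E)
            = 4 * CY * (1 + 1/eps) * Real.sqrt E := by
          field_simp
        rw [key, hMdef]
        have hq : ((1/eps) * (CY + CY) + (CY + CY)) * (Real.sqrt E * 2)
            = 4 * CY * (1 + 1/eps) * Real.sqrt E := by ring
        rw [hq]

end ATE
end
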